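/- arXiv:1406.1054 — 3 statements merged into one kernel-verified Lean document; each statement's English description precedes it below -/
import Mathlib

section
/- Let F be a one-dimensional commutative formal group law over a commutative ring R, and let a₁₁, a₁₂, a₁₃, a₂₂ ∈ R be the coefficients of xy, x²y, x³y, x²y² in F respectively. Then 2(a₂₂ - a₁₁a₁₂) = 3a₁₃ in R. (This is the only relation among formal group law coefficients in degree 4; it holds in the Lazard ring.) -/
/-!
Formal group law preliminaries: substitution of (multivariate) formal power series,
the definition of a one-dimensional commutative formal group law, its formal inverse,
and the formal difference `x -_F y := F(x, ι(y))`.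
-/

noncomputable section

open MvPowerSeries

/-- Substitution `f(a 0, a 1, …)` of multivariate power series (the intended use is when
each `a i` has zero constant coefficient): the coefficient at `e` only receives
contributions from monomials of `f` with exponent `d` such that each `d i` is at most the
total degree of `e`. -/
def MvPowerSeries.substSeries {σ τ R : Type*} [Fintype σ] [DecidableEq σ] [CommRing R]
    (a : σ → MvPowerSeries τ R) (f : MvPowerSeries σ R) : MvPowerSeries τ R :=
  fun e => ∑ d ∈ Finset.Iic (Finsupp.equivFunOnFinite.symm fun _ : σ => e.sum fun _ n => n),
    MvPowerSeries.coeff d f * MvPowerSeries.coeff e (∏ i, (a i) ^ d i)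

/-- A one-dimensional commutative formal group law over a commutative ring `R`:
a power series `F ∈ R[[x,y]]` with `F(x,0) = x`, `F(0,y) = y`, `F(x,y) = F(y,x)` and
`F(F(x,y),z) = F(x,F(y,z))` (an identity of power series in `R[[x,y,z]]`). -/
structure IsFormalGroupLaw (R : Type*) [CommRing R] (F : MvPowerSeries (Fin 2) R) : Prop where
  subst_zero_right :
    MvPowerSeries.substSeries (![X 0, 0] : Fin 2 → MvPowerSeries (Fin 2) R) F = X 0
  subst_zero_left :
    MvPowerSeries.substSeries (![0, X 1] : Fin 2 → MvPowerSeries (Fin 2) R) F = X 1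
  comm :
    MvPowerSeries.substSeries (![X 1, X 0] : Fin 2 → MvPowerSeries (Fin 2) R) F = F
  assoc :
    MvPowerSeries.substSeries
      (![MvPowerSeries.substSeries (![X 0, X 1] : Fin 2 → MvPowerSeries (Fin 3) R) F, X 2] :
        Fin 2 → MvPowerSeries (Fin 3) R) F
    = MvPowerSeries.substSeries
      (![X 0, MvPowerSeries.substSeries (![X 1, X 2] : Fin 2 → MvPowerSeries (Fin 3) R) F] :
        Fin 2 → MvPowerSeries (Fin 3) R) F

/-- `ι` is the formal inverse of the formal group law `F`: a univariate power series with
zero constant term such that `F(x, ι(x)) = 0`. -/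
def IsFormalInverse {R : Type*} [CommRing R] (F : MvPowerSeries (Fin 2) R)
    (ι : PowerSeries R) : Prop :=
  PowerSeries.constantCoeff ι = 0 ∧
    MvPowerSeries.substSeries (![PowerSeries.X, ι] : Fin 2 → PowerSeries R) F = 0

/-- The formal difference `x -_F y := F(x, ι(y))`. -/
def fDiff {R : Type*} [CommRing R] (F : MvPowerSeries (Fin 2) R) (ι : PowerSeries R) :
    MvPowerSeries (Fin 2) R :=
  MvPowerSeries.substSeries
    (![X 0, MvPowerSeries.substSeries (fun _ : Unit => (X 1 : MvPowerSeries (Fin 2) R)) ι] :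
      Fin 2 → MvPowerSeries (Fin 2) R) F

/-- The formal difference `y -_F x := F(y, ι(x))`. -/
def fDiffSwap {R : Type*} [CommRing R] (F : MvPowerSeries (Fin 2) R) (ι : PowerSeries R) :
    MvPowerSeries (Fin 2) R :=
  MvPowerSeries.substSeries
    (![X 1, MvPowerSeries.substSeries (fun _ : Unit => (X 0 : MvPowerSeries (Fin 2) R)) ι] :
      Fin 2 → MvPowerSeries (Fin 2) R) F

section AuxLemmas

open Finsupp

lemma sum_Iic_two {M : Type*} [AddCommMonoid M] (N : ℕ) (f : (Fin 2 →₀ ℕ) → M) :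
    ∑ d ∈ Finset.Iic (Finsupp.equivFunOnFinite.symm fun _ : Fin 2 => N), f d
    = ∑ i ∈ Finset.range (N+1), ∑ j ∈ Finset.range (N+1),
        f (Finsupp.single 0 i + Finsupp.single 1 j) := by
  rw [← Finset.sum_product']
  apply Finset.sum_nbij' (i := fun d => (d 0, d 1))
    (j := fun p => Finsupp.single 0 p.1 + Finsupp.single 1 p.2)
  · intro d hd
    simp only [Finset.mem_Iic, Finsupp.le_def] at hd
    simp only [Finset.mem_product, Finset.mem_range, Nat.lt_succ_iff]
    exact ⟨by simpa using hd 0, by simpa using hd 1⟩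
  · intro p hp
    simp only [Finset.mem_product, Finset.mem_range, Nat.lt_succ_iff] at hp
    simp only [Finset.mem_Iic, Finsupp.le_def]
    intro i
    fin_cases i <;> simp [Finsupp.single_apply, hp.1, hp.2]
  · intro d hd
    ext i
    fin_cases i <;> simp [Finsupp.single_apply]
  · intro p hp
    simp [Finsupp.single_apply]
  · intro d hd
    congr 1
    ext i
    fin_cases i <;> simp [Finsupp.single_apply]

lemma coeff_substSeries {τ R : Type*} [CommRing R] (a : Fin 2 → MvPowerSeries τ R)
    (f : MvPowerSeries (Fin 2) R) (e : τ →₀ ℕ) :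
    MvPowerSeries.coeff e (MvPowerSeries.substSeries a f)
    = ∑ i ∈ Finset.range ((e.sum fun _ n => n)+1),
        ∑ j ∈ Finset.range ((e.sum fun _ n => n)+1),
          MvPowerSeries.coeff (Finsupp.single 0 i + Finsupp.single 1 j) f *
            MvPowerSeries.coeff e (a 0 ^ i * a 1 ^ j) := by
  rw [MvPowerSeries.coeff_apply, MvPowerSeries.substSeries, sum_Iic_two]
  refine Finset.sum_congr rfl fun i _ => Finset.sum_congr rfl fun j _ => ?_
  congr 2
  rw [Fin.prod_univ_two]
  congr 1 <;> congr 1 <;> simp [Finsupp.single_apply]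

variable {R : Type*} [CommRing R]

-- degree of a single
lemma sum_single0 (k : ℕ) : ((Finsupp.single 0 k : Fin 2 →₀ ℕ).sum fun _ n => n) = k := by
  simp [Finsupp.sum_single_index]

lemma cF_right {F : MvPowerSeries (Fin 2) R}
    (h : MvPowerSeries.substSeries (![X 0, 0] : Fin 2 → MvPowerSeries (Fin 2) R) F = X 0)
    (k : ℕ) :
    MvPowerSeries.coeff (Finsupp.single 0 k) F = if k = 1 then 1 else 0 := by
  have h2 := congrArg (MvPowerSeries.coeff (Finsupp.single 0 k : Fin 2 →₀ ℕ)) h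
  rw [coeff_substSeries, sum_single0] at h2
  simp only [Matrix.cons_val_zero, Matrix.cons_val_one, Matrix.head_cons] at h2
  rw [MvPowerSeries.coeff_X] at h2
  have hcond : (Finsupp.single 0 k : Fin 2 →₀ ℕ) = Finsupp.single 0 1 ↔ k = 1 := by
    constructor
    · intro hh; simpa using DFunLike.congr_fun hh 0
    · rintro rfl; rfl
  rw [if_congr hcond rfl rfl] at h2
  rw [← h2]
  have inner : ∀ i ∈ Finset.range (k+1),
      (∑ j ∈ Finset.range (k+1), (MvPowerSeries.coeff (Finsupp.single 0 i + Finsupp.single 1 j)) F *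
        (MvPowerSeries.coeff (Finsupp.single 0 k : Fin 2 →₀ ℕ)) ((X 0 : MvPowerSeries (Fin 2) R) ^ i * 0 ^ j))
      = (MvPowerSeries.coeff (Finsupp.single 0 i + Finsupp.single 1 0)) F *
          (if (Finsupp.single 0 k : Fin 2 →₀ ℕ) = Finsupp.single 0 i then 1 else 0) := by
    intro i _
    rw [Finset.sum_eq_single 0]
    · rw [pow_zero, mul_one, MvPowerSeries.coeff_X_pow]
    · intro j _ hj
      rw [zero_pow hj, mul_zero, map_zero, mul_zero]
    · intro habs; exact absurd (Finset.mem_range.2 (Nat.succ_pos k)) habs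
  rw [Finset.sum_congr rfl inner, Finset.sum_eq_single k]
  · rw [if_pos rfl, mul_one]
    simp
  · intro i _ hik
    rw [if_neg, mul_zero]
    intro hh
    have h3 := DFunLike.congr_fun hh 0
    rw [Finsupp.single_eq_same, Finsupp.single_eq_same] at h3
    omega
  · intro habs; exact absurd (Finset.self_mem_range_succ k) habs

lemma sum_single1 (k : ℕ) : ((Finsupp.single 1 k : Fin 2 →₀ ℕ).sum fun _ n => n) = k := by
  simp [Finsupp.sum_single_index]

lemma cF_left {F : MvPowerSeries (Fin 2) R}
    (h : MvPowerSeries.substSeries (![0, X 1] : Fin 2 → MvPowerSeries (Fin 2) R) F = X 1)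
    (k : ℕ) :
    MvPowerSeries.coeff (Finsupp.single 1 k) F = if k = 1 then 1 else 0 := by
  have h2 := congrArg (MvPowerSeries.coeff (Finsupp.single 1 k : Fin 2 →₀ ℕ)) h
  rw [coeff_substSeries, sum_single1] at h2
  simp only [Matrix.cons_val_zero, Matrix.cons_val_one, Matrix.head_cons] at h2
  rw [MvPowerSeries.coeff_X] at h2
  have hcond : (Finsupp.single 1 k : Fin 2 →₀ ℕ) = Finsupp.single 1 1 ↔ k = 1 := by
    constructor
    · intro hh
      have h3 := DFunLike.congr_fun hh 1
      rw [Finsupp.single_eq_same, Finsupp.single_eq_same] at h3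
      exact h3
    · rintro rfl; rfl
  rw [if_congr hcond rfl rfl] at h2
  rw [← h2]
  rw [Finset.sum_eq_single 0]
  · rw [Finset.sum_eq_single k]
    · rw [pow_zero, one_mul, MvPowerSeries.coeff_X_pow, if_pos rfl, mul_one]
      simp
    · intro j _ hjk
      rw [pow_zero, one_mul, MvPowerSeries.coeff_X_pow, if_neg, mul_zero]
      intro hh
      have h3 := DFunLike.congr_fun hh 1
      rw [Finsupp.single_eq_same, Finsupp.single_eq_same] at h3
      omega
    · intro habs; exact absurd (Finset.self_mem_range_succ k) habs
  · intro i _ hi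
    rw [zero_pow hi]
    simp
  · intro habs; exact absurd (Finset.mem_range.2 (Nat.succ_pos k)) habs

lemma sum_pair (a b : ℕ) :
    ((Finsupp.single 0 a + Finsupp.single 1 b : Fin 2 →₀ ℕ).sum fun _ n => n) = a + b := by
  rw [Finsupp.sum_add_index']
  · rw [sum_single0, sum_single1]
  · intro _; rfl
  · intro _ _ _; rfl

lemma cF_symm {F : MvPowerSeries (Fin 2) R}
    (h : MvPowerSeries.substSeries (![X 1, X 0] : Fin 2 → MvPowerSeries (Fin 2) R) F = F)
    (a b : ℕ) :
    MvPowerSeries.coeff (Finsupp.single 0 a + Finsupp.single 1 b) F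
    = MvPowerSeries.coeff (Finsupp.single 0 b + Finsupp.single 1 a) F := by
  have h2 := congrArg
    (MvPowerSeries.coeff (Finsupp.single 0 a + Finsupp.single 1 b : Fin 2 →₀ ℕ)) h
  rw [coeff_substSeries, sum_pair] at h2
  simp only [Matrix.cons_val_zero, Matrix.cons_val_one, Matrix.head_cons] at h2
  rw [← h2]
  have hmon : ∀ i j : ℕ, (X 1 : MvPowerSeries (Fin 2) R) ^ i * (X 0) ^ j
      = MvPowerSeries.monomial (Finsupp.single 0 j + Finsupp.single 1 i) 1 := by
    intro i j
    rw [MvPowerSeries.X_pow_eq, MvPowerSeries.X_pow_eq, MvPowerSeries.monomial_mul_monomial,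
      one_mul, add_comm]
  rw [Finset.sum_eq_single b]
  · rw [Finset.sum_eq_single a]
    · rw [hmon, MvPowerSeries.coeff_monomial, if_pos rfl, mul_one]
    · intro j _ hj
      rw [hmon, MvPowerSeries.coeff_monomial, if_neg, mul_zero]
      intro hh
      have h3 := DFunLike.congr_fun hh 0
      simp [Finsupp.single_apply] at h3
      omega
    · intro habs; exact absurd (Finset.mem_range.2 (by omega)) habs
  · intro i _ hi
    apply Finset.sum_eq_zero
    intro j _
    rw [hmon, MvPowerSeries.coeff_monomial, if_neg, mul_zero]
    intro hh
    have h3 := DFunLike.congr_fun hh 1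
    simp [Finsupp.single_apply] at h3
    omega
  · intro habs; exact absurd (Finset.mem_range.2 (by omega)) habs

/-- Exponent (i,j,k) over three variables. -/
def E (i j k : ℕ) : Fin 3 →₀ ℕ :=
  Finsupp.single 0 i + Finsupp.single 1 j + Finsupp.single 2 k

lemma E_apply0 (i j k : ℕ) : E i j k 0 = i := by simp [E, Finsupp.single_apply]
lemma E_apply1 (i j k : ℕ) : E i j k 1 = j := by simp [E, Finsupp.single_apply]
lemma E_apply2 (i j k : ℕ) : E i j k 2 = k := by simp [E, Finsupp.single_apply]

lemma E_eq_iff {i j k i' j' k' : ℕ} : E i j k = E i' j' k' ↔ i = i' ∧ j = j' ∧ k = k' := by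
  constructor
  · intro h
    refine ⟨?_, ?_, ?_⟩
    · have := DFunLike.congr_fun h 0; rwa [E_apply0, E_apply0] at this
    · have := DFunLike.congr_fun h 1; rwa [E_apply1, E_apply1] at this
    · have := DFunLike.congr_fun h 2; rwa [E_apply2, E_apply2] at this
  · rintro ⟨rfl, rfl, rfl⟩; rfl

lemma E_ext (e : Fin 3 →₀ ℕ) : e = E (e 0) (e 1) (e 2) := by
  ext l
  fin_cases l <;> simp [E, Finsupp.single_apply]

lemma sum_E (i j k : ℕ) : ((E i j k).sum fun _ n => n) = i + j + k := by
  rw [Finsupp.sum_fintype]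
  · rw [Fin.sum_univ_three, E_apply0, E_apply1, E_apply2]
  · intro _; rfl

lemma degree_eq (e : Fin 3 →₀ ℕ) : (e.sum fun _ n => n) = e 0 + e 1 + e 2 := by
  rw [Finsupp.sum_fintype]
  · rw [Fin.sum_univ_three]
  · intro _; rfl

/-- coefficient of `F(x,y)` viewed in three variables -/
lemma coeff_w {F : MvPowerSeries (Fin 2) R} (e : Fin 3 →₀ ℕ) :
    MvPowerSeries.coeff e
      (MvPowerSeries.substSeries (![X 0, X 1] : Fin 2 → MvPowerSeries (Fin 3) R) F)
    = if e 2 = 0 then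
        MvPowerSeries.coeff (Finsupp.single 0 (e 0) + Finsupp.single 1 (e 1)) F else 0 := by
  rw [coeff_substSeries]
  simp only [Matrix.cons_val_zero, Matrix.cons_val_one, Matrix.head_cons]
  have hmon : ∀ i j : ℕ, (X 0 : MvPowerSeries (Fin 3) R) ^ i * (X 1) ^ j
      = MvPowerSeries.monomial (E i j 0) 1 := by
    intro i j
    rw [MvPowerSeries.X_pow_eq, MvPowerSeries.X_pow_eq, MvPowerSeries.monomial_mul_monomial,
      one_mul, E, Finsupp.single_zero, add_zero]
  have hdeg := degree_eq e
  rw [Finset.sum_eq_single (e 0)]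
  · rw [Finset.sum_eq_single (e 1)]
    · rw [hmon, MvPowerSeries.coeff_monomial]
      by_cases h2 : e 2 = 0
      · rw [if_pos h2, if_pos, mul_one]
        conv_lhs => rw [E_ext e, h2]
      · rw [if_neg h2, if_neg, mul_zero]
        intro hh
        have := DFunLike.congr_fun hh 2
        rw [E_apply2] at this
        omega
    · intro j _ hj
      rw [hmon, MvPowerSeries.coeff_monomial, if_neg, mul_zero]
      intro hh
      have := DFunLike.congr_fun hh 1
      rw [E_apply1] at this
      omega
    · intro habs; exact absurd (Finset.mem_range.2 (by omega)) habs
  · intro i _ hi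
    apply Finset.sum_eq_zero
    intro j _
    rw [hmon, MvPowerSeries.coeff_monomial, if_neg, mul_zero]
    intro hh
    have := DFunLike.congr_fun hh 0
    rw [E_apply0] at this
    omega
  · intro habs; exact absurd (Finset.mem_range.2 (by omega)) habs

/-- coefficient of `F(y,z)` viewed in three variables -/
lemma coeff_v {F : MvPowerSeries (Fin 2) R} (e : Fin 3 →₀ ℕ) :
    MvPowerSeries.coeff e
      (MvPowerSeries.substSeries (![X 1, X 2] : Fin 2 → MvPowerSeries (Fin 3) R) F)
    = if e 0 = 0 then
        MvPowerSeries.coeff (Finsupp.single 0 (e 1) + Finsupp.single 1 (e 2)) F else 0 := by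
  rw [coeff_substSeries]
  simp only [Matrix.cons_val_zero, Matrix.cons_val_one, Matrix.head_cons]
  have hmon : ∀ i j : ℕ, (X 1 : MvPowerSeries (Fin 3) R) ^ i * (X 2) ^ j
      = MvPowerSeries.monomial (E 0 i j) 1 := by
    intro i j
    rw [MvPowerSeries.X_pow_eq, MvPowerSeries.X_pow_eq, MvPowerSeries.monomial_mul_monomial,
      one_mul, E, Finsupp.single_zero, zero_add]
  have hdeg := degree_eq e
  rw [Finset.sum_eq_single (e 1)]
  · rw [Finset.sum_eq_single (e 2)]
    · rw [hmon, MvPowerSeries.coeff_monomial]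
      by_cases h0 : e 0 = 0
      · rw [if_pos h0, if_pos, mul_one]
        conv_lhs => rw [E_ext e, h0]
      · rw [if_neg h0, if_neg, mul_zero]
        intro hh
        have := DFunLike.congr_fun hh 0
        rw [E_apply0] at this
        omega
    · intro j _ hj
      rw [hmon, MvPowerSeries.coeff_monomial, if_neg, mul_zero]
      intro hh
      have := DFunLike.congr_fun hh 2
      rw [E_apply2] at this
      omega
    · intro habs; exact absurd (Finset.mem_range.2 (by omega)) habs
  · intro i _ hi
    apply Finset.sum_eq_zero
    intro j _
    rw [hmon, MvPowerSeries.coeff_monomial, if_neg, mul_zero]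
    intro hh
    have := DFunLike.congr_fun hh 1
    rw [E_apply1] at this
    omega
  · intro habs; exact absurd (Finset.mem_range.2 (by omega)) habs

lemma coeff_pow_apply_ne {g : MvPowerSeries (Fin 3) R} (s : Fin 3)
    (hg : ∀ e : Fin 3 →₀ ℕ, e s ≠ 0 → MvPowerSeries.coeff e g = 0) :
    ∀ (k : ℕ) (e : Fin 3 →₀ ℕ), e s ≠ 0 → MvPowerSeries.coeff e (g ^ k) = 0 := by
  intro k
  induction k with
  | zero =>
    intro e he
    rw [pow_zero, MvPowerSeries.coeff_one, if_neg]
    intro h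
    rw [h] at he
    simp at he
  | succ n ih =>
    intro e he
    rw [pow_succ, MvPowerSeries.coeff_mul]
    apply Finset.sum_eq_zero
    intro p hp
    rw [Finset.HasAntidiagonal.mem_antidiagonal] at hp
    have hps : p.1 s + p.2 s = e s := by rw [← Finsupp.add_apply, hp]
    by_cases h1 : p.1 s = 0
    · have h2 : p.2 s ≠ 0 := by omega
      rw [hg p.2 h2, mul_zero]
    · rw [ih p.1 h1, zero_mul]

lemma finsupp3_eq_zero_of_sum {p : Fin 3 →₀ ℕ} (h : (p.sum fun _ n => n) = 0) : p = 0 := by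
  rw [degree_eq] at h
  ext l
  fin_cases l <;> simp <;> omega

lemma coeff_pow_of_lt {g : MvPowerSeries (Fin 3) R}
    (hg : MvPowerSeries.coeff 0 g = 0) :
    ∀ (k : ℕ) (e : Fin 3 →₀ ℕ), (e.sum fun _ n => n) < k →
      MvPowerSeries.coeff e (g ^ k) = 0 := by
  intro k
  induction k with
  | zero => intro e he; omega
  | succ n ih =>
    intro e he
    rw [pow_succ, MvPowerSeries.coeff_mul]
    apply Finset.sum_eq_zero
    intro p hp
    rw [Finset.HasAntidiagonal.mem_antidiagonal] at hp
    have hdeg : (p.1.sum fun _ n => n) + (p.2.sum fun _ n => n) = (e.sum fun _ n => n) := by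
      rw [degree_eq, degree_eq, degree_eq, ← hp]
      simp [Finsupp.add_apply]
      ring
    by_cases h1 : (p.1.sum fun _ n => n) < n
    · rw [ih p.1 h1, zero_mul]
    · have h2 : (p.2.sum fun _ n => n) = 0 := by omega
      rw [finsupp3_eq_zero_of_sum h2, hg, mul_zero]

lemma coeff_mul3 (f g : MvPowerSeries (Fin 3) R) (e : Fin 3 →₀ ℕ) :
    MvPowerSeries.coeff e (f * g)
    = ∑ i ∈ Finset.range (e 0 + 1), ∑ j ∈ Finset.range (e 1 + 1), ∑ k ∈ Finset.range (e 2 + 1),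
        MvPowerSeries.coeff (E i j k) f * MvPowerSeries.coeff (e - E i j k) g := by
  rw [MvPowerSeries.coeff_mul]
  rw [← Finset.sum_product', ← Finset.sum_product']
  apply Finset.sum_nbij' (i := fun p => ((p.1 0, p.1 1), p.1 2))
    (j := fun q => (E q.1.1 q.1.2 q.2, e - E q.1.1 q.1.2 q.2))
  · intro p hp
    rw [Finset.HasAntidiagonal.mem_antidiagonal] at hp
    simp only [Finset.mem_product, Finset.mem_range, Nat.lt_succ_iff]
    have h0 : p.1 0 + p.2 0 = e 0 := by rw [← Finsupp.add_apply, hp]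
    have h1 : p.1 1 + p.2 1 = e 1 := by rw [← Finsupp.add_apply, hp]
    have h2 : p.1 2 + p.2 2 = e 2 := by rw [← Finsupp.add_apply, hp]
    exact ⟨⟨by omega, by omega⟩, by omega⟩
  · intro q hq
    simp only [Finset.mem_product, Finset.mem_range, Nat.lt_succ_iff] at hq
    rw [Finset.HasAntidiagonal.mem_antidiagonal]
    have hle : E q.1.1 q.1.2 q.2 ≤ e := by
      rw [Finsupp.le_def]
      intro l
      have h0 := hq.1.1
      have h1 := hq.1.2
      have h2 := hq.2
      fin_cases l <;> simp [E, Finsupp.single_apply] <;> omega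
    rw [add_comm]
    exact tsub_add_cancel_of_le hle
  · intro p hp
    rw [Finset.HasAntidiagonal.mem_antidiagonal] at hp
    have h1 : E (p.1 0) (p.1 1) (p.1 2) = p.1 := (E_ext p.1).symm
    have h2 : e - p.1 = p.2 := by rw [← hp]; simp
    simp only [h1, h2]
  · intro q hq
    simp only [E_apply0, E_apply1, E_apply2]
  · intro p hp
    rw [Finset.HasAntidiagonal.mem_antidiagonal] at hp
    have h1 : E (p.1 0) (p.1 1) (p.1 2) = p.1 := (E_ext p.1).symm
    rw [h1]
    congr 1
    rw [← hp]; simp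

lemma E_sub (a b c i j k : ℕ) : E a b c - E i j k = E (a-i) (b-j) (c-k) := by
  ext l
  fin_cases l <;> simp [E, Finsupp.single_apply, Finsupp.tsub_apply]

lemma E_zero : (0 : Fin 3 →₀ ℕ) = E 0 0 0 := by simp [E]

lemma coeff_w_E {F : MvPowerSeries (Fin 2) R} (i j k : ℕ) :
    MvPowerSeries.coeff (E i j k)
      (MvPowerSeries.substSeries (![X 0, X 1] : Fin 2 → MvPowerSeries (Fin 3) R) F)
    = if k = 0 then MvPowerSeries.coeff (Finsupp.single 0 i + Finsupp.single 1 j) F else 0 := by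
  rw [coeff_w, E_apply0, E_apply1, E_apply2]

lemma coeff_v_E {F : MvPowerSeries (Fin 2) R} (i j k : ℕ) :
    MvPowerSeries.coeff (E i j k)
      (MvPowerSeries.substSeries (![X 1, X 2] : Fin 2 → MvPowerSeries (Fin 3) R) F)
    = if i = 0 then MvPowerSeries.coeff (Finsupp.single 0 j + Finsupp.single 1 k) F else 0 := by
  rw [coeff_v, E_apply0, E_apply1, E_apply2]

end AuxLemmas

/-- Let `F` be a one-dimensional commutative formal group law over a
commutative ring `R`, and let `a₁₁, a₁₂, a₁₃, a₂₂` be the coefficients of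
`xy, x²y, x³y, x²y²` in `F`. Then `2(a₂₂ - a₁₁a₁₂) = 3a₁₃` in `R` (the degree-4 relation
of the Lazard ring). -/
theorem fgl_lazard_degree_four_relation {R : Type*} [CommRing R]
    (F : MvPowerSeries (Fin 2) R) (hF : IsFormalGroupLaw R F)
    (a₁₁ a₁₂ a₁₃ a₂₂ : R)
    (ha₁₁ : a₁₁ = MvPowerSeries.coeff (Finsupp.single 0 1 + Finsupp.single 1 1) F)
    (ha₁₂ : a₁₂ = MvPowerSeries.coeff (Finsupp.single 0 2 + Finsupp.single 1 1) F)
    (ha₁₃ : a₁₃ = MvPowerSeries.coeff (Finsupp.single 0 3 + Finsupp.single 1 1) F)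
    (ha₂₂ : a₂₂ = MvPowerSeries.coeff (Finsupp.single 0 2 + Finsupp.single 1 2) F) :
    2 * (a₂₂ - a₁₁ * a₁₂) = 3 * a₁₃ := by
  classical
  -- base coefficient values
  have C00 : MvPowerSeries.coeff (Finsupp.single 0 0 + Finsupp.single 1 0) F = 0 := by
    have := cF_right hF.subst_zero_right 0
    simpa using this
  have C10 : MvPowerSeries.coeff (Finsupp.single 0 1 + Finsupp.single 1 0) F = 1 := by
    have := cF_right hF.subst_zero_right 1
    simpa using this
  have C20 : MvPowerSeries.coeff (Finsupp.single 0 2 + Finsupp.single 1 0) F = 0 := by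
    have := cF_right hF.subst_zero_right 2
    simpa using this
  have C30 : MvPowerSeries.coeff (Finsupp.single 0 3 + Finsupp.single 1 0) F = 0 := by
    have := cF_right hF.subst_zero_right 3
    simpa using this
  have C01 : MvPowerSeries.coeff (Finsupp.single 0 0 + Finsupp.single 1 1) F = 1 := by
    have := cF_left hF.subst_zero_left 1
    simpa using this
  have C02 : MvPowerSeries.coeff (Finsupp.single 0 0 + Finsupp.single 1 2) F = 0 := by
    have := cF_left hF.subst_zero_left 2
    simpa using this
  have C12 : MvPowerSeries.coeff (Finsupp.single 0 1 + Finsupp.single 1 2) F = a₁₂ := by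
    rw [cF_symm hF.comm, ← ha₁₂]
  have Z00 : MvPowerSeries.constantCoeff F = 0 := by
    have := cF_right hF.subst_zero_right 0
    simpa [← MvPowerSeries.coeff_zero_eq_constantCoeff] using this
  have Z10 : MvPowerSeries.coeff (Finsupp.single 0 1) F = 1 := by
    simpa using cF_right hF.subst_zero_right 1
  have Z20 : MvPowerSeries.coeff (Finsupp.single 0 2) F = 0 := by
    simpa using cF_right hF.subst_zero_right 2
  have Z30 : MvPowerSeries.coeff (Finsupp.single 0 3) F = 0 := by
    simpa using cF_right hF.subst_zero_right 3
  have Z01 : MvPowerSeries.coeff (Finsupp.single 1 1) F = 1 := by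
    simpa using cF_left hF.subst_zero_left 1
  have Z02 : MvPowerSeries.coeff (Finsupp.single 1 2) F = 0 := by
    simpa using cF_left hF.subst_zero_left 2
  -- the two composite series
  set w : MvPowerSeries (Fin 3) R :=
    MvPowerSeries.substSeries (![X 0, X 1] : Fin 2 → MvPowerSeries (Fin 3) R) F with hw
  set v : MvPowerSeries (Fin 3) R :=
    MvPowerSeries.substSeries (![X 1, X 2] : Fin 2 → MvPowerSeries (Fin 3) R) F with hv
  have cw : ∀ i j k : ℕ, MvPowerSeries.coeff (E i j k) w
      = if k = 0 then MvPowerSeries.coeff (Finsupp.single 0 i + Finsupp.single 1 j) F else 0 :=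
    fun i j k => coeff_w_E i j k
  have cv : ∀ i j k : ℕ, MvPowerSeries.coeff (E i j k) v
      = if i = 0 then MvPowerSeries.coeff (Finsupp.single 0 j + Finsupp.single 1 k) F else 0 :=
    fun i j k => coeff_v_E i j k
  have hw0 : MvPowerSeries.coeff 0 w = 0 := by rw [E_zero, cw]; simpa using C00
  have hv0 : MvPowerSeries.coeff 0 v = 0 := by rw [E_zero, cv]; simpa using C00
  have hwne : ∀ e : Fin 3 →₀ ℕ, e 2 ≠ 0 → MvPowerSeries.coeff e w = 0 := by
    intro e he
    rw [coeff_w, if_neg he]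
  have hvne : ∀ e : Fin 3 →₀ ℕ, e 0 ≠ 0 → MvPowerSeries.coeff e v = 0 := by
    intro e he
    rw [coeff_v, if_neg he]
  -- low-degree coefficients of powers of w
  have hw2_200 : MvPowerSeries.coeff (E 2 0 0) (w ^ 2) = 1 := by
    rw [pow_two, coeff_mul3, E_apply0, E_apply1, E_apply2]
    simp only [Finset.sum_range_succ, Finset.sum_range_zero, E_sub, cw]
    norm_num [Z00, Z10, Z20]
  have hw2_110 : MvPowerSeries.coeff (E 1 1 0) (w ^ 2) = 2 := by
    rw [pow_two, coeff_mul3, E_apply0, E_apply1, E_apply2]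
    simp only [Finset.sum_range_succ, Finset.sum_range_zero, E_sub, cw]
    norm_num [Z00, Z10, Z01]
  have hw2_210 : MvPowerSeries.coeff (E 2 1 0) (w ^ 2) = 2 * a₁₁ := by
    rw [pow_two, coeff_mul3, E_apply0, E_apply1, E_apply2]
    simp only [Finset.sum_range_succ, Finset.sum_range_zero, E_sub, cw]
    norm_num [Z00, Z10, Z20, Z01, ← ha₁₁, ← ha₁₂]
    ring
  have hw3_210 : MvPowerSeries.coeff (E 2 1 0) (w ^ 3) = 3 := by
    have h3 : w ^ 3 = w ^ 2 * w := by ring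
    rw [h3, coeff_mul3, E_apply0, E_apply1, E_apply2]
    have hlow : ∀ e : Fin 3 →₀ ℕ, (e.sum fun _ n => n) < 2 →
        MvPowerSeries.coeff e (w ^ 2) = 0 := coeff_pow_of_lt hw0 2
    have l000 : MvPowerSeries.coeff (E 0 0 0) (w ^ 2) = 0 := hlow _ (by rw [sum_E]; norm_num)
    have l100 : MvPowerSeries.coeff (E 1 0 0) (w ^ 2) = 0 := hlow _ (by rw [sum_E]; norm_num)
    have l010 : MvPowerSeries.coeff (E 0 1 0) (w ^ 2) = 0 := hlow _ (by rw [sum_E]; norm_num)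
    simp only [Finset.sum_range_succ, Finset.sum_range_zero, E_sub]
    norm_num [l000, l100, l010, hw2_110, hw2_200, hw2_210, cw, Z00, Z10, Z01]
  have hw4_210 : MvPowerSeries.coeff (E 2 1 0) (w ^ 4) = 0 :=
    coeff_pow_of_lt hw0 4 _ (by rw [sum_E]; norm_num)
  have hv2_011 : MvPowerSeries.coeff (E 0 1 1) (v ^ 2) = 2 := by
    rw [pow_two, coeff_mul3, E_apply0, E_apply1, E_apply2]
    simp only [Finset.sum_range_succ, Finset.sum_range_zero, E_sub, cv]
    norm_num [Z00, Z10, Z01]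
  have hv3_011 : MvPowerSeries.coeff (E 0 1 1) (v ^ 3) = 0 :=
    coeff_pow_of_lt hv0 3 _ (by rw [sum_E]; norm_num)
  have hv4_011 : MvPowerSeries.coeff (E 0 1 1) (v ^ 4) = 0 :=
    coeff_pow_of_lt hv0 4 _ (by rw [sum_E]; norm_num)
  -- coefficient factors in the associativity sums
  have hwpow : ∀ (k : ℕ) (e : Fin 3 →₀ ℕ), e 2 ≠ 0 → MvPowerSeries.coeff e (w ^ k) = 0 :=
    coeff_pow_apply_ne 2 hwne
  have hvpow : ∀ (k : ℕ) (e : Fin 3 →₀ ℕ), e 0 ≠ 0 → MvPowerSeries.coeff e (v ^ k) = 0 :=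
    coeff_pow_apply_ne 0 hvne
  have hLc : ∀ i j : ℕ,
      MvPowerSeries.coeff (E 2 1 1) (w ^ i * (X 2 : MvPowerSeries (Fin 3) R) ^ j)
      = if j = 1 then MvPowerSeries.coeff (E 2 1 0) (w ^ i) else 0 := by
    intro i j
    rw [MvPowerSeries.X_pow_eq, MvPowerSeries.coeff_mul_monomial]
    rcases j with _ | _ | j
    · rw [if_pos, if_neg (by norm_num), mul_one]
      · have h0 : E 2 1 1 - Finsupp.single 2 0 = E 2 1 1 := by simp
        rw [h0]
        exact hwpow i _ (by rw [E_apply2]; norm_num)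
      · simp
    · rw [if_pos, if_pos rfl, mul_one]
      · have h0 : E 2 1 1 - Finsupp.single 2 1 = E 2 1 0 := by
          ext l
          fin_cases l <;> simp [E, Finsupp.single_apply, Finsupp.tsub_apply]
        rw [h0]
      · rw [Finsupp.le_def]
        intro l
        fin_cases l <;> simp [E, Finsupp.single_apply]
    · rw [if_neg, if_neg (by omega)]
      intro hle
      have := Finsupp.le_def.1 hle 2
      rw [Finsupp.single_eq_same, E_apply2] at this
      omega
  have hRc : ∀ i j : ℕ,
      MvPowerSeries.coeff (E 2 1 1) ((X 0 : MvPowerSeries (Fin 3) R) ^ i * v ^ j)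
      = if i = 2 then MvPowerSeries.coeff (E 0 1 1) (v ^ j) else 0 := by
    intro i j
    rw [mul_comm, MvPowerSeries.X_pow_eq, MvPowerSeries.coeff_mul_monomial]
    rcases i with _ | _ | _ | i
    · rw [if_pos, if_neg (by norm_num), mul_one]
      · have h0 : E 2 1 1 - Finsupp.single 0 0 = E 2 1 1 := by simp
        rw [h0]
        exact hvpow j _ (by rw [E_apply0]; norm_num)
      · simp
    · rw [if_pos, if_neg (by norm_num), mul_one]
      · have h0 : E 2 1 1 - Finsupp.single 0 1 = E 1 1 1 := by
          ext l
          fin_cases l <;> simp [E, Finsupp.single_apply, Finsupp.tsub_apply]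
        rw [h0]
        exact hvpow j _ (by rw [E_apply0]; norm_num)
      · rw [Finsupp.le_def]
        intro l
        fin_cases l <;> simp [E, Finsupp.single_apply]
    · rw [if_pos, if_pos rfl, mul_one]
      · have h0 : E 2 1 1 - Finsupp.single 0 2 = E 0 1 1 := by
          ext l
          fin_cases l <;> simp [E, Finsupp.single_apply, Finsupp.tsub_apply]
        rw [h0]
      · rw [Finsupp.le_def]
        intro l
        fin_cases l <;> simp [E, Finsupp.single_apply]
    · rw [if_neg, if_neg (by omega)]
      intro hle
      have := Finsupp.le_def.1 hle 0
      rw [Finsupp.single_eq_same, E_apply0] at this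
      omega
  -- single coefficients of powers at the relevant exponents
  have hE210_one : MvPowerSeries.coeff (E 2 1 0) (1 : MvPowerSeries (Fin 3) R) = 0 := by
    rw [MvPowerSeries.coeff_one, if_neg]
    intro h
    have := DFunLike.congr_fun h 0
    rw [E_apply0] at this
    simp at this
  have hE011_one : MvPowerSeries.coeff (E 0 1 1) (1 : MvPowerSeries (Fin 3) R) = 0 := by
    rw [MvPowerSeries.coeff_one, if_neg]
    intro h
    have := DFunLike.congr_fun h 1
    rw [E_apply1] at this
    simp at this
  have hw1_210' : MvPowerSeries.coeff (E 2 1 0) w = a₁₂ := by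
    rw [cw, if_pos rfl, ← ha₁₂]
  have hv1_011' : MvPowerSeries.coeff (E 0 1 1) v = a₁₁ := by
    rw [cv, if_pos rfl, ← ha₁₁]
  have hw1_210 : MvPowerSeries.coeff (E 2 1 0) (w ^ 1) = a₁₂ := by
    rw [pow_one, cw, if_pos rfl, ← ha₁₂]
  have hv1_011 : MvPowerSeries.coeff (E 0 1 1) (v ^ 1) = a₁₁ := by
    rw [pow_one, cv, if_pos rfl, ← ha₁₁]
  -- extract the coefficient of x²yz from associativity
  have hkey := congrArg (MvPowerSeries.coeff (E 2 1 1)) hF.assoc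
  rw [← hw, ← hv] at hkey
  rw [coeff_substSeries, coeff_substSeries, sum_E] at hkey
  simp only [Matrix.cons_val_zero, Matrix.cons_val_one, Matrix.head_cons] at hkey
  simp only [hLc, hRc] at hkey
  simp only [Finset.sum_range_succ, Finset.sum_range_zero] at hkey
  norm_num [pow_zero, hE210_one, hE011_one, hw1_210, hv1_011, hw2_210, hw3_210, hw4_210,
    hv2_011, hv3_011, hv4_011, hw1_210', hv1_011', ← ha₁₁, ← ha₁₂, ← ha₁₃, ← ha₂₂, Z01] at hkey
  linear_combination -hkey
end
end

section
/- Let F be a one-dimensional commutative formal group law over a commutative ring R with formal inverse ι. Then there exists a power series u ∈ R[[x,y]] with constant term 1 (hence a unit of R[[x,y]]) such that x -_F y = (x - y)·u. In particular x - y divides x -_F y and the quotient is an invertible power series. -/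
/-!
Formal group law preliminaries: substitution of (multivariate) formal power series,
the definition of a one-dimensional commutative formal group law, its formal inverse,
and the formal difference `x -_F y := F(x, ι(y))`.
-/

noncomputable section

open MvPowerSeries

namespace FGLAux

open Finsupp Finset

variable {R : Type*} [CommRing R]

/-- The exponent `(i, j)` as a `Fin 2 →₀ ℕ`. -/
def e2 (i j : ℕ) : Fin 2 →₀ ℕ := Finsupp.single 0 i + Finsupp.single 1 j

@[simp] lemma e2_apply0 (i j : ℕ) : e2 i j 0 = i := by
  simp [e2, Finsupp.single_apply]

@[simp] lemma e2_apply1 (i j : ℕ) : e2 i j 1 = j := by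
  simp [e2, Finsupp.single_apply]

lemma fin2_ext {e f : Fin 2 →₀ ℕ} (h0 : e 0 = f 0) (h1 : e 1 = f 1) : e = f :=
  Finsupp.ext fun i => by fin_cases i <;> simpa

lemma eq_e2 (e : Fin 2 →₀ ℕ) : e = e2 (e 0) (e 1) :=
  fin2_ext (by simp) (by simp)

lemma wt_eq (e : Fin 2 →₀ ℕ) : (e.sum fun _ n => n) = e 0 + e 1 := by
  rw [Finsupp.sum_fintype _ _ fun _ => rfl, Fin.sum_univ_two]

lemma unit_finsupp_eq (d : Unit →₀ ℕ) : d = Finsupp.single () (d ()) :=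
  Finsupp.ext fun i => by cases i; simp

lemma cb_apply {σ : Type*} [Finite σ] (n : ℕ) (i : σ) :
    (Finsupp.equivFunOnFinite.symm fun _ : σ => n) i = n := rfl

lemma mem_Iic_iff {σ : Type*} [Fintype σ] [DecidableEq σ] {d : σ →₀ ℕ} {n : ℕ} :
    d ∈ Finset.Iic (Finsupp.equivFunOnFinite.symm fun _ : σ => n) ↔ ∀ i, d i ≤ n := by
  rw [Finset.mem_Iic]
  constructor
  · intro h i; exact (Finsupp.le_def.mp h i).trans_eq (cb_apply n i)
  · intro h; exact Finsupp.le_def.mpr fun i => (h i).trans_eq (cb_apply n i).symm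

lemma coeff_substSeries {τ : Type*} (a : Fin 2 → MvPowerSeries τ R)
    (f : MvPowerSeries (Fin 2) R) (e : τ →₀ ℕ) :
    MvPowerSeries.coeff e (MvPowerSeries.substSeries a f) =
      ∑ d ∈ Finset.Iic (Finsupp.equivFunOnFinite.symm fun _ : Fin 2 => e.sum fun _ n => n),
        MvPowerSeries.coeff d f * MvPowerSeries.coeff e (a 0 ^ d 0 * a 1 ^ d 1) := by
  simp only [MvPowerSeries.coeff_apply, MvPowerSeries.substSeries]
  exact Finset.sum_congr rfl fun d _ => by rw [Fin.prod_univ_two]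

lemma Pcoeff (n : ℕ) (f : PowerSeries R) :
    MvPowerSeries.coeff (Finsupp.single () n) f = PowerSeries.coeff n f := rfl

lemma coeff_substSeriesU (a : Unit → MvPowerSeries (Fin 2) R) (f : PowerSeries R)
    (e : Fin 2 →₀ ℕ) :
    MvPowerSeries.coeff e (MvPowerSeries.substSeries a f) =
      ∑ d ∈ Finset.Iic (Finsupp.equivFunOnFinite.symm fun _ : Unit => e.sum fun _ n => n),
        PowerSeries.coeff (d ()) f * MvPowerSeries.coeff e (a () ^ d ()) := by
  simp only [MvPowerSeries.coeff_apply, MvPowerSeries.substSeries]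
  refine Finset.sum_congr rfl fun d _ => ?_
  rw [Fintype.prod_unique]
  congr 1
  rw [← Pcoeff, ← unit_finsupp_eq]
  rfl

lemma eq_zero_iff (e : Fin 2 →₀ ℕ) : e = 0 ↔ e 0 = 0 ∧ e 1 = 0 := by
  constructor
  · rintro rfl; simp
  · rintro ⟨a, b⟩; exact fin2_ext (by simpa) (by simpa)

lemma single1_of_apply0 {u : Fin 2 →₀ ℕ} (h : u 0 = 0) : u = Finsupp.single 1 (u 1) :=
  fin2_ext (by simp [h, Finsupp.single_apply]) (by simp)

/-- The embedding `R[[t]] → R[[x,y]]`, `t ↦ y`, as a bare function. -/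
def E (h : PowerSeries R) : MvPowerSeries (Fin 2) R :=
  fun e => if e 0 = 0 then PowerSeries.coeff (e 1) h else 0

lemma coeff_E (h : PowerSeries R) (e : Fin 2 →₀ ℕ) :
    MvPowerSeries.coeff e (E h) = if e 0 = 0 then PowerSeries.coeff (e 1) h else 0 := rfl

lemma E_one : E (1 : PowerSeries R) = 1 := by
  ext e
  rw [coeff_E, MvPowerSeries.coeff_one, PowerSeries.coeff_one]
  by_cases h0 : e 0 = 0 <;> by_cases h1 : e 1 = 0 <;>
    simp [h0, h1, eq_zero_iff]

/-- Embedding of `ℕ × ℕ` into pairs of exponents supported on the variable `y`. -/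
def emb : ℕ × ℕ ↪ (Fin 2 →₀ ℕ) × (Fin 2 →₀ ℕ) :=
  ⟨fun p => (Finsupp.single 1 p.1, Finsupp.single 1 p.2), by
    rintro ⟨a, b⟩ ⟨c, d⟩ h
    simp only [Prod.mk.injEq] at h ⊢
    exact ⟨Finsupp.single_injective 1 h.1, Finsupp.single_injective 1 h.2⟩⟩

lemma emb_apply (p : ℕ × ℕ) : emb p = (Finsupp.single 1 p.1, Finsupp.single 1 p.2) := rfl

lemma E_mul (h g : PowerSeries R) : E (h * g) = E h * E g := by
  classical
  ext e
  rw [MvPowerSeries.coeff_mul, coeff_E]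
  by_cases h0 : e 0 = 0
  · rw [if_pos h0, PowerSeries.coeff_mul]
    rw [← Finset.sum_subset (s₁ := (Finset.HasAntidiagonal.antidiagonal (e 1)).map emb)
        (h := ?_) (hf := ?_)]
    · rw [Finset.sum_map]
      refine Finset.sum_congr rfl fun p _ => ?_
      simp [emb_apply, coeff_E, Finsupp.single_apply]
    · intro p hp
      rw [Finset.mem_map] at hp
      obtain ⟨q, hq, rfl⟩ := hp
      rw [Finset.HasAntidiagonal.mem_antidiagonal]
      simp only [emb_apply]
      rw [← Finsupp.single_add, Finset.HasAntidiagonal.mem_antidiagonal.mp hq]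
      exact (single1_of_apply0 h0).symm
    · intro p hp hnp
      by_cases hp0 : p.1 0 = 0
      · by_cases hp2 : p.2 0 = 0
        · exfalso
          apply hnp
          rw [Finset.mem_map]
          refine ⟨(p.1 1, p.2 1), ?_, ?_⟩
          · rw [Finset.HasAntidiagonal.mem_antidiagonal]
            have := Finset.HasAntidiagonal.mem_antidiagonal.mp hp
            have h1 : p.1 1 + p.2 1 = e 1 := by
              rw [← Finsupp.add_apply, this]
            exact h1
          · simp only [emb_apply]
            rw [← single1_of_apply0 hp0, ← single1_of_apply0 hp2, Prod.mk.eta]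
        · rw [coeff_E (h := g) (e := p.2), if_neg hp2, mul_zero]
      · rw [coeff_E (h := h) (e := p.1), if_neg hp0, zero_mul]
  · rw [if_neg h0]
    symm
    refine Finset.sum_eq_zero fun p hp => ?_
    have hsum : p.1 0 + p.2 0 = e 0 := by
      rw [← Finsupp.add_apply, Finset.HasAntidiagonal.mem_antidiagonal.mp hp]
    by_cases hp0 : p.1 0 = 0
    · have : p.2 0 ≠ 0 := fun h => h0 (by omega)
      rw [coeff_E (e := p.2), if_neg this, mul_zero]
    · rw [coeff_E (e := p.1), if_neg hp0, zero_mul]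

lemma E_pow (h : PowerSeries R) (b : ℕ) : E (h ^ b) = E h ^ b := by
  induction b with
  | zero => simpa using E_one
  | succ b ih => rw [pow_succ, pow_succ, E_mul, ih]

end FGLAux
namespace FGLAux

open Finsupp Finset

variable {R : Type*} [CommRing R]

lemma coeff_X_mul_gen (s : Fin 2) (f : MvPowerSeries (Fin 2) R) (e : Fin 2 →₀ ℕ) :
    MvPowerSeries.coeff e ((X s : MvPowerSeries (Fin 2) R) * f) =
      if Finsupp.single s 1 ≤ e then MvPowerSeries.coeff (e - Finsupp.single s 1) f else 0 := by
  classical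
  rw [MvPowerSeries.X_def, MvPowerSeries.coeff_monomial_mul]
  split_ifs <;> simp

lemma coeff_X_pow_mul_E (h : PowerSeries R) (a i j : ℕ) :
    MvPowerSeries.coeff (e2 i j) ((X 0 : MvPowerSeries (Fin 2) R) ^ a * E h)
      = if i = a then PowerSeries.coeff j h else 0 := by
  classical
  rw [MvPowerSeries.X_pow_eq, MvPowerSeries.coeff_monomial_mul]
  by_cases hle : Finsupp.single (0 : Fin 2) a ≤ e2 i j
  · have ha : a ≤ i := by
      have := Finsupp.single_le_iff.mp hle
      rwa [e2_apply0] at this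
    have hsub : e2 i j - Finsupp.single 0 a = e2 (i - a) j := by
      refine fin2_ext ?_ ?_ <;>
        simp [Finsupp.tsub_apply, Finsupp.single_apply]
    rw [if_pos hle, one_mul, hsub, coeff_E, e2_apply0, e2_apply1]
    by_cases hia : i = a
    · rw [if_pos (by omega), if_pos hia]
    · rw [if_neg (by omega), if_neg hia]
  · have hia : i ≠ a := by
      rintro rfl
      exact hle (Finsupp.single_le_iff.mpr (by simp))
    rw [if_neg hle, if_neg hia]

lemma diag_X_pow_mul_E (h : PowerSeries R) (a n : ℕ) :
    ∑ p ∈ Finset.HasAntidiagonal.antidiagonal n, MvPowerSeries.coeff (e2 p.1 p.2)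
        ((X 0 : MvPowerSeries (Fin 2) R) ^ a * E h)
      = PowerSeries.coeff n (PowerSeries.X ^ a * h) := by
  rw [PowerSeries.coeff_X_pow_mul', Finset.Nat.sum_antidiagonal_eq_sum_range_succ_mk]
  simp only [coeff_X_pow_mul_E]
  rw [Finset.sum_ite_eq' (Finset.range (n + 1)) a fun k => PowerSeries.coeff (n - k) h]
  simp [Nat.lt_succ_iff]

lemma substSeries_X1_eq_E (ι : PowerSeries R) :
    MvPowerSeries.substSeries (fun _ : Unit => (X 1 : MvPowerSeries (Fin 2) R)) ι = E ι := by
  classical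
  ext e
  rw [coeff_substSeriesU, coeff_E]
  by_cases h0 : e 0 = 0
  · rw [if_pos h0]
    rw [Finset.sum_eq_single_of_mem (Finsupp.single () (e 1))]
    · rw [Finsupp.single_eq_same, MvPowerSeries.coeff_X_pow,
        if_pos (single1_of_apply0 h0), mul_one]
    · rw [mem_Iic_iff]
      intro i
      rw [Finsupp.single_eq_same, wt_eq]
      omega
    · intro b _ hb
      rw [MvPowerSeries.coeff_X_pow, if_neg, mul_zero]
      intro hx
      apply hb
      have h1 : b () = e 1 := by rw [hx]; simp
      rw [unit_finsupp_eq b, h1]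
  · rw [if_neg h0]
    refine Finset.sum_eq_zero fun d _ => ?_
    rw [MvPowerSeries.coeff_X_pow, if_neg, mul_zero]
    intro hx
    apply h0
    rw [hx]
    simp [Finsupp.single_apply]

end FGLAux
namespace FGLAux

open Finsupp Finset

variable {R : Type*} [CommRing R]

lemma wt_single0 : ((Finsupp.single (0 : Fin 2) 1).sum fun _ n => n) = 1 := by
  rw [wt_eq]; simp [Finsupp.single_apply]

lemma wt_single1 : ((Finsupp.single (1 : Fin 2) 1).sum fun _ n => n) = 1 := by
  rw [wt_eq]; simp [Finsupp.single_apply]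

lemma wt_unit (n : ℕ) : ((Finsupp.single () n).sum fun _ k => k) = n :=
  Finsupp.sum_single_index rfl

lemma constantCoeff_F (F : MvPowerSeries (Fin 2) R) (hF : IsFormalGroupLaw R F) :
    MvPowerSeries.coeff (0 : Fin 2 →₀ ℕ) F = 0 := by
  classical
  have h := congrArg (MvPowerSeries.coeff (0 : Fin 2 →₀ ℕ)) hF.subst_zero_right
  rw [coeff_substSeries] at h
  simp only [Matrix.cons_val_zero, Matrix.cons_val_one, Matrix.head_cons,
    Finsupp.sum_zero_index] at h
  rw [Finset.sum_eq_single_of_mem (0 : Fin 2 →₀ ℕ)] at h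
  · simpa using h
  · rw [mem_Iic_iff]; intro i; simp
  · intro b hb hbne
    exfalso
    apply hbne
    rw [mem_Iic_iff] at hb
    exact fin2_ext (by simpa using hb 0) (by simpa using hb 1)

lemma coeff_F_x (F : MvPowerSeries (Fin 2) R) (hF : IsFormalGroupLaw R F) :
    MvPowerSeries.coeff (Finsupp.single 0 1) F = 1 := by
  classical
  have h := congrArg (MvPowerSeries.coeff (Finsupp.single (0 : Fin 2) 1)) hF.subst_zero_right
  rw [coeff_substSeries, wt_single0] at h
  simp only [Matrix.cons_val_zero, Matrix.cons_val_one, Matrix.head_cons] at h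
  rw [Finset.sum_eq_single_of_mem (Finsupp.single (0 : Fin 2) 1)] at h
  · rw [Finsupp.single_eq_same, Finsupp.single_eq_of_ne (by decide : (1 : Fin 2) ≠ 0),
      pow_one, pow_zero, mul_one, MvPowerSeries.coeff_X, if_pos rfl, mul_one] at h
    exact h
  · rw [mem_Iic_iff]
    intro i
    simp [Finsupp.single_apply]
    split <;> omega
  · intro b _ hbne
    by_cases hb1 : b 1 = 0
    · rw [hb1, pow_zero, mul_one, MvPowerSeries.coeff_X_pow]
      by_cases hb0 : b 0 = 1
      · exact absurd (fin2_ext (by simp [hb0]) (by simp [hb1])) hbne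
      · rw [if_neg, mul_zero]
        intro hx
        apply hb0
        have := DFunLike.congr_fun hx (0 : Fin 2)
        simpa using this.symm
    · rw [zero_pow hb1, mul_zero, map_zero, mul_zero]

lemma coeff_F_y (F : MvPowerSeries (Fin 2) R) (hF : IsFormalGroupLaw R F) :
    MvPowerSeries.coeff (Finsupp.single 1 1) F = 1 := by
  classical
  have h := congrArg (MvPowerSeries.coeff (Finsupp.single (1 : Fin 2) 1)) hF.subst_zero_left
  rw [coeff_substSeries, wt_single1] at h
  simp only [Matrix.cons_val_zero, Matrix.cons_val_one, Matrix.head_cons] at h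
  rw [Finset.sum_eq_single_of_mem (Finsupp.single (1 : Fin 2) 1)] at h
  · rw [Finsupp.single_eq_same, Finsupp.single_eq_of_ne (by decide : (0 : Fin 2) ≠ 1),
      pow_one, pow_zero, one_mul, MvPowerSeries.coeff_X, if_pos rfl, mul_one] at h
    exact h
  · rw [mem_Iic_iff]
    intro i
    simp [Finsupp.single_apply]
    split <;> omega
  · intro b _ hbne
    by_cases hb0 : b 0 = 0
    · rw [hb0, pow_zero, one_mul, MvPowerSeries.coeff_X_pow]
      by_cases hb1 : b 1 = 1
      · exact absurd (fin2_ext (by simp [hb0]) (by simp [hb1])) hbne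
      · rw [if_neg, mul_zero]
        intro hx
        apply hb1
        have := DFunLike.congr_fun hx (1 : Fin 2)
        simpa using this.symm
    · rw [zero_pow hb0, zero_mul, map_zero, mul_zero]

lemma coeff_iota_one (F : MvPowerSeries (Fin 2) R) (hF : IsFormalGroupLaw R F)
    (ι : PowerSeries R) (hι : IsFormalInverse F ι) :
    PowerSeries.coeff 1 ι = -1 := by
  classical
  have h := congrArg (MvPowerSeries.coeff (Finsupp.single () 1)) hι.2
  rw [coeff_substSeries, wt_unit, map_zero] at h
  simp only [Matrix.cons_val_zero, Matrix.cons_val_one, Matrix.head_cons] at h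
  have hterm : ∀ d : Fin 2 →₀ ℕ,
      MvPowerSeries.coeff (Finsupp.single () 1) (PowerSeries.X ^ d 0 * ι ^ d 1)
        = if d 0 ≤ 1 then PowerSeries.coeff (1 - d 0) (ι ^ d 1) else 0 := fun d => by
    rw [Pcoeff, PowerSeries.coeff_X_pow_mul']
  have hmem0 : Finsupp.single (0 : Fin 2) 1 ∈
      Finset.Iic (Finsupp.equivFunOnFinite.symm fun _ : Fin 2 => 1) := by
    rw [mem_Iic_iff]; intro i; simp [Finsupp.single_apply]; split <;> omega
  rw [← Finset.add_sum_erase _ _ hmem0] at h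
  have hmem1 : Finsupp.single (1 : Fin 2) 1 ∈
      (Finset.Iic (Finsupp.equivFunOnFinite.symm fun _ : Fin 2 => 1)).erase
        (Finsupp.single (0 : Fin 2) 1) := by
    rw [Finset.mem_erase]
    constructor
    · intro hx
      have := DFunLike.congr_fun hx (0 : Fin 2)
      simp [Finsupp.single_apply] at this
    · rw [mem_Iic_iff]; intro i; simp [Finsupp.single_apply]; split <;> omega
  rw [Finset.sum_eq_single_of_mem _ hmem1] at h
  · rw [hterm, hterm] at h
    simp only [Finsupp.single_eq_same, Finsupp.single_eq_of_ne (by decide : (0 : Fin 2) ≠ 1),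
      Finsupp.single_eq_of_ne (by decide : (1 : Fin 2) ≠ 0)] at h
    rw [if_pos (by omega), if_pos (by omega), pow_zero, pow_one] at h
    simp only [Nat.sub_self, Nat.sub_zero, PowerSeries.coeff_zero_eq_constantCoeff] at h
    rw [map_one, mul_one, coeff_F_x F hF, coeff_F_y F hF, one_mul] at h
    linear_combination h
  · intro b hb hbne
    rw [Finset.mem_erase] at hb
    obtain ⟨hbne0, hbmem⟩ := hb
    rw [mem_Iic_iff] at hbmem
    have hb0 : b 0 ≤ 1 := hbmem 0
    have hb1 : b 1 ≤ 1 := hbmem 1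
    rw [hterm]
    rcases Nat.le_one_iff_eq_zero_or_eq_one.mp hb0 with h0 | h0 <;>
      rcases Nat.le_one_iff_eq_zero_or_eq_one.mp hb1 with h1 | h1
    · simp [h0, h1, PowerSeries.coeff_one]
    · exact absurd (fin2_ext (by simp [h0, Finsupp.single_apply])
        (by simp [h1, Finsupp.single_apply])) hbne
    · exact absurd (fin2_ext (by simp [h0, Finsupp.single_apply])
        (by simp [h1, Finsupp.single_apply])) hbne0
    · simp [h0, h1, PowerSeries.coeff_zero_eq_constantCoeff, hι.1]

end FGLAux
namespace FGLAux

open Finsupp Finset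

variable {R : Type*} [CommRing R]

lemma coeff_fDiff_01 (F : MvPowerSeries (Fin 2) R) (hF : IsFormalGroupLaw R F)
    (ι : PowerSeries R) (hι : IsFormalInverse F ι) :
    MvPowerSeries.coeff (e2 0 1) (fDiff F ι) = -1 := by
  classical
  rw [fDiff, coeff_substSeries]
  simp only [Matrix.cons_val_zero, Matrix.cons_val_one, Matrix.head_cons,
    substSeries_X1_eq_E]
  have hwt : ((e2 0 1).sum fun _ n => n) = 1 := by rw [wt_eq]; simp
  rw [hwt]
  have hterm : ∀ b : Fin 2 →₀ ℕ,
      MvPowerSeries.coeff (e2 0 1) ((X 0 : MvPowerSeries (Fin 2) R) ^ b 0 * E ι ^ b 1)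
        = if (0 : ℕ) = b 0 then PowerSeries.coeff 1 (ι ^ b 1) else 0 := fun b => by
    rw [← E_pow, coeff_X_pow_mul_E]
  rw [Finset.sum_eq_single_of_mem (Finsupp.single (1 : Fin 2) 1)]
  · rw [hterm]
    have h0 : (Finsupp.single (1 : Fin 2) 1) 0 = 0 := Finsupp.single_eq_of_ne (by decide)
    have h1 : (Finsupp.single (1 : Fin 2) 1) 1 = 1 := Finsupp.single_eq_same
    rw [h0, h1, if_pos rfl, pow_one, coeff_F_y F hF, coeff_iota_one F hF ι hι, one_mul]
  · rw [mem_Iic_iff]; intro i; simp [Finsupp.single_apply]; split <;> omega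
  · intro b hbmem hbne
    rw [mem_Iic_iff] at hbmem
    rw [hterm]
    rcases Nat.le_one_iff_eq_zero_or_eq_one.mp (hbmem 0) with h0 | h0 <;>
      rcases Nat.le_one_iff_eq_zero_or_eq_one.mp (hbmem 1) with h1 | h1
    · simp [h0, h1, PowerSeries.coeff_one]
    · exact absurd (fin2_ext (by simp [h0, Finsupp.single_apply])
        (by simp [h1, Finsupp.single_apply])) hbne
    · simp [h0]
    · simp [h0]

lemma diag_fDiff (F : MvPowerSeries (Fin 2) R) (hF : IsFormalGroupLaw R F)
    (ι : PowerSeries R) (hι : IsFormalInverse F ι) (n : ℕ) :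
    ∑ p ∈ Finset.HasAntidiagonal.antidiagonal n, MvPowerSeries.coeff (e2 p.1 p.2) (fDiff F ι) = 0 := by
  classical
  have key := congrArg (MvPowerSeries.coeff (Finsupp.single () n)) hι.2
  rw [coeff_substSeries, wt_unit, map_zero] at key
  simp only [Matrix.cons_val_zero, Matrix.cons_val_one, Matrix.head_cons] at key
  calc ∑ p ∈ Finset.HasAntidiagonal.antidiagonal n, MvPowerSeries.coeff (e2 p.1 p.2) (fDiff F ι)
      = ∑ p ∈ Finset.HasAntidiagonal.antidiagonal n,
          ∑ d ∈ Finset.Iic (Finsupp.equivFunOnFinite.symm fun _ : Fin 2 => n),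
            MvPowerSeries.coeff d F * MvPowerSeries.coeff (e2 p.1 p.2)
              ((X 0 : MvPowerSeries (Fin 2) R) ^ d 0 * E (ι ^ d 1)) := by
        refine Finset.sum_congr rfl fun p hp => ?_
        rw [fDiff, coeff_substSeries]
        have hw : ((e2 p.1 p.2).sum fun _ k => k) = n := by
          rw [wt_eq, e2_apply0, e2_apply1]; exact Finset.HasAntidiagonal.mem_antidiagonal.mp hp
        rw [hw]
        refine Finset.sum_congr rfl fun d _ => ?_
        simp only [Matrix.cons_val_zero, Matrix.cons_val_one, Matrix.head_cons,
          substSeries_X1_eq_E, ← E_pow]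
    _ = ∑ d ∈ Finset.Iic (Finsupp.equivFunOnFinite.symm fun _ : Fin 2 => n),
          MvPowerSeries.coeff d F * ∑ p ∈ Finset.HasAntidiagonal.antidiagonal n,
            MvPowerSeries.coeff (e2 p.1 p.2)
              ((X 0 : MvPowerSeries (Fin 2) R) ^ d 0 * E (ι ^ d 1)) := by
        rw [Finset.sum_comm]
        exact Finset.sum_congr rfl fun d _ => (Finset.mul_sum _ _ _).symm
    _ = ∑ d ∈ Finset.Iic (Finsupp.equivFunOnFinite.symm fun _ : Fin 2 => n),
          MvPowerSeries.coeff d F * MvPowerSeries.coeff (Finsupp.single () n)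
            (PowerSeries.X ^ d 0 * ι ^ d 1) := by
        refine Finset.sum_congr rfl fun d _ => ?_
        rw [diag_X_pow_mul_E, Pcoeff]
    _ = 0 := key

lemma exists_factor (G : MvPowerSeries (Fin 2) R)
    (hdiag : ∀ n, ∑ p ∈ Finset.HasAntidiagonal.antidiagonal n, MvPowerSeries.coeff (e2 p.1 p.2) G = 0) :
    ∃ u : MvPowerSeries (Fin 2) R,
      MvPowerSeries.coeff 0 u = - MvPowerSeries.coeff (e2 0 1) G ∧
      G = ((X 0 : MvPowerSeries (Fin 2) R) - X 1) * u := by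
  classical
  have hd : ∀ n, ∑ k ∈ Finset.range (n + 1), MvPowerSeries.coeff (e2 k (n - k)) G = 0 := by
    intro n
    have h := hdiag n
    rwa [Finset.Nat.sum_antidiagonal_eq_sum_range_succ_mk] at h
  set u : MvPowerSeries (Fin 2) R := fun e => -∑ k ∈ Finset.range (e 0 + 1),
      MvPowerSeries.coeff (e2 k (e 0 + e 1 + 1 - k)) G with hu_def
  have hu : ∀ i j : ℕ, MvPowerSeries.coeff (e2 i j) u
      = -∑ k ∈ Finset.range (i + 1), MvPowerSeries.coeff (e2 k (i + j + 1 - k)) G := by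
    intro i j
    show -∑ k ∈ Finset.range ((e2 i j) 0 + 1),
      MvPowerSeries.coeff (e2 k ((e2 i j) 0 + (e2 i j) 1 + 1 - k)) G = _
    simp only [e2_apply0, e2_apply1]
  refine ⟨u, ?_, ?_⟩
  · have h := hu 0 0
    have h0 : e2 0 0 = (0 : Fin 2 →₀ ℕ) := fin2_ext (by simp) (by simp)
    rw [h0] at h
    rw [h]
    simp
  · have main : ∀ i j : ℕ,
        MvPowerSeries.coeff (e2 i j) (((X 0 : MvPowerSeries (Fin 2) R) - X 1) * u)
          = MvPowerSeries.coeff (e2 i j) G := by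
      intro i j
      rw [sub_mul, map_sub, coeff_X_mul_gen, coeff_X_mul_gen]
      have c0 : (Finsupp.single (0 : Fin 2) 1 ≤ e2 i j) ↔ 1 ≤ i := by
        rw [Finsupp.single_le_iff, e2_apply0]
      have c1 : (Finsupp.single (1 : Fin 2) 1 ≤ e2 i j) ↔ 1 ≤ j := by
        rw [Finsupp.single_le_iff, e2_apply1]
      have s0 : 1 ≤ i → e2 i j - Finsupp.single 0 1 = e2 (i - 1) j := fun _ =>
        fin2_ext (by simp [Finsupp.tsub_apply, Finsupp.single_apply])
          (by simp [Finsupp.tsub_apply, Finsupp.single_apply])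
      have s1 : 1 ≤ j → e2 i j - Finsupp.single 1 1 = e2 i (j - 1) := fun _ =>
        fin2_ext (by simp [Finsupp.tsub_apply, Finsupp.single_apply])
          (by simp [Finsupp.tsub_apply, Finsupp.single_apply])
      rcases i with _ | i <;> rcases j with _ | j
      · rw [if_neg (by rw [c0]; omega), if_neg (by rw [c1]; omega), sub_zero]
        have h00 := hd 0
        simp only [zero_add, Finset.range_one, Finset.sum_singleton, Nat.sub_zero] at h00
        exact h00.symm
      · rw [if_neg (by rw [c0]; omega), if_pos (c1.mpr (by omega)), s1 (by omega)]
        simp only [Nat.succ_sub_one, Nat.add_sub_cancel]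
        rw [hu]
        simp only [zero_add, Finset.range_one, Finset.sum_singleton]
        norm_num
      · rw [if_pos (c0.mpr (by omega)), if_neg (by rw [c1]; omega), sub_zero, s0 (by omega)]
        simp only [Nat.succ_sub_one, Nat.add_sub_cancel]
        rw [hu]
        have hdi := hd (i + 1)
        rw [Finset.sum_range_succ] at hdi
        simp only [Nat.sub_self] at hdi
        rw [show (∑ k ∈ Finset.range (i + 1), MvPowerSeries.coeff (e2 k (i + 0 + 1 - k)) G)
            = ∑ k ∈ Finset.range (i + 1), MvPowerSeries.coeff (e2 k (i + 1 - k)) G from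
          Finset.sum_congr rfl fun k _ => by norm_num]
        linear_combination -hdi
      · rw [if_pos (c0.mpr (by omega)), if_pos (c1.mpr (by omega)),
          s0 (by omega), s1 (by omega)]
        simp only [Nat.succ_sub_one, Nat.add_sub_cancel]
        rw [hu, hu]
        have hsplit : (∑ k ∈ Finset.range (i + 1 + 1),
              MvPowerSeries.coeff (e2 k (i + 1 + j + 1 - k)) G)
            = (∑ k ∈ Finset.range (i + 1),
                MvPowerSeries.coeff (e2 k (i + (j + 1) + 1 - k)) G)
              + MvPowerSeries.coeff (e2 (i + 1) (j + 1)) G := by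
          rw [Finset.sum_range_succ]
          congr 1
          · exact Finset.sum_congr rfl fun k hk => by
              have : i + 1 + j + 1 - k = i + (j + 1) + 1 - k := by omega
              rw [this]
          · have : i + 1 + j + 1 - (i + 1) = j + 1 := by omega
            rw [this]
        rw [hsplit]
        ring
    ext e
    rw [eq_e2 e]
    exact (main (e 0) (e 1)).symm

end FGLAux
/-- Let `F` be a one-dimensional commutative formal group law over `R`
with formal inverse `ι`. Then there is a power series `u` with constant term `1` (hence a
unit of `R[[x,y]]`) such that `x -_F y = (x - y)·u`; in particular `x - y` divides
`x -_F y` with invertible quotient. -/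
theorem fgl_fDiff_eq_sub_mul_unit {R : Type*} [CommRing R]
    (F : MvPowerSeries (Fin 2) R) (hF : IsFormalGroupLaw R F)
    (ι : PowerSeries R) (hι : IsFormalInverse F ι) :
    ∃ u : MvPowerSeries (Fin 2) R,
      MvPowerSeries.constantCoeff u = 1 ∧
      fDiff F ι = ((X 0 : MvPowerSeries (Fin 2) R) - X 1) * u := by
  obtain ⟨u, hu0, hfac⟩ := FGLAux.exists_factor (fDiff F ι) (FGLAux.diag_fDiff F hF ι hι)
  refine ⟨u, ?_, hfac⟩
  rw [← MvPowerSeries.coeff_zero_eq_constantCoeff_apply, hu0,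
    FGLAux.coeff_fDiff_01 F hF ι hι, neg_neg]
end
end

section
/- Let F be a one-dimensional commutative formal group law over a commutative ring R with formal inverse ι, and let σ be the R-algebra automorphism of R[[x,y]] exchanging x and y. Then for every f ∈ R[[x,y]], the element f·(y -_F x) + σ(f)·(x -_F y) is divisible by (x -_F y)·(y -_F x) in R[[x,y]]. (This expresses that the formal divided difference operator C(f) = f/(x -_F y) + σ(f)/(y -_F x) maps power series to power series.) -/
set_option linter.unusedSectionVars false
set_option maxHeartbeats 1000000


/-!
Formal group law preliminaries: substitution of (multivariate) formal power series,
the definition of a one-dimensional commutative formal group law, its formal inverse,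
and the formal difference `x -_F y := F(x, ι(y))`.
-/

noncomputable section

open MvPowerSeries

namespace SubstAux

variable {σ τ υ R : Type*} [Fintype σ] [DecidableEq σ] [DecidableEq τ] [CommRing R]

/-- total degree of an exponent -/
def deg {τ : Type*} (e : τ →₀ ℕ) : ℕ := e.sum fun _ n => n

lemma deg_add (e1 e2 : τ →₀ ℕ) : deg (e1 + e2) = deg e1 + deg e2 :=
  Finsupp.sum_add_index' (fun _ => rfl) (fun _ _ _ => rfl)

lemma deg_zero : deg (0 : τ →₀ ℕ) = 0 := Finsupp.sum_zero_index

lemma eq_zero_of_deg_eq_zero {e : τ →₀ ℕ} (h : deg e = 0) : e = 0 := by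
  ext i
  by_cases hi : i ∈ e.support
  · have := Finset.single_le_sum (f := fun i : τ => e i) (fun _ _ => Nat.zero_le _) hi
    simp only [deg, Finsupp.sum] at h
    simp only [h, Nat.le_zero] at this
    simp [this]
  · simpa using Finsupp.notMem_support_iff.mp hi

lemma apply_le_deg (e : τ →₀ ℕ) (i : τ) : e i ≤ deg e := by
  by_cases hi : i ∈ e.support
  · exact Finset.single_le_sum (f := fun i : τ => e i) (fun _ _ => Nat.zero_le _) hi
  · simp [Finsupp.notMem_support_iff.mp hi]

lemma deg_mono {e1 e2 : τ →₀ ℕ} (h : e1 ≤ e2) : deg e1 ≤ deg e2 := by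
  obtain ⟨c, rfl⟩ := le_iff_exists_add.mp h
  rw [deg_add]; omega

/-- bound Finsupp -/
def bnd (σ : Type*) [Fintype σ] (n : ℕ) : σ →₀ ℕ := Finsupp.equivFunOnFinite.symm fun _ => n

lemma bnd_apply (n : ℕ) (i : σ) : bnd σ n i = n := rfl

lemma le_bnd_iff {d : σ →₀ ℕ} {n : ℕ} : d ≤ bnd σ n ↔ ∀ i, d i ≤ n := by
  constructor
  · intro h i; exact h i
  · intro h i; exact h i

lemma coeff_multiset_prod_eq_zero :
    ∀ (n : ℕ) (L : Multiset (MvPowerSeries τ R)),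
      (∀ f ∈ L, constantCoeff f = 0) → n ≤ Multiset.card L →
      ∀ e : τ →₀ ℕ, deg e < n → coeff e L.prod = 0 := by
  intro n
  induction n with
  | zero => intro _ _ _ e he; omega
  | succ n ih =>
    intro L hL hcard e he
    have hne : L ≠ 0 := by
      intro h; rw [h] at hcard; simp at hcard
    obtain ⟨f, hf⟩ := Multiset.exists_mem_of_ne_zero hne
    obtain ⟨L', rfl⟩ := Multiset.exists_cons_of_mem hf
    rw [Multiset.prod_cons, coeff_mul]
    apply Finset.sum_eq_zero
    rintro ⟨e1, e2⟩ hmem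
    rw [Finset.HasAntidiagonal.mem_antidiagonal] at hmem
    by_cases h1 : e1 = 0
    · have : coeff e1 f = 0 := by
        rw [h1, coeff_zero_eq_constantCoeff]
        exact hL f (Multiset.mem_cons_self f L')
      rw [this, zero_mul]
    · have hd1 : 0 < deg e1 := by
        rcases Nat.eq_zero_or_pos (deg e1) with h | h
        · exact absurd (eq_zero_of_deg_eq_zero h) h1
        · exact h
      have hde : deg e2 < n := by
        have := deg_add e1 e2
        rw [hmem] at this
        omega
      have : coeff e2 L'.prod = 0 := by
        apply ih L' (fun g hg => hL g (Multiset.mem_cons_of_mem hg)) _ e2 hde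
        have := Multiset.card_cons f L'
        omega
      rw [this, mul_zero]

lemma coeff_prod_pow_eq_zero {a : σ → MvPowerSeries τ R}
    (ha : ∀ i, constantCoeff (a i) = 0) (d : σ →₀ ℕ) (e : τ →₀ ℕ)
    (i : σ) (h : deg e < d i) :
    coeff e (∏ j, a j ^ d j) = 0 := by
  have hprod : (∏ j, a j ^ d j) =
      (Finset.univ.val.bind fun j => Multiset.replicate (d j) (a j)).prod := by
    rw [Multiset.prod_bind]
    simp only [Multiset.prod_replicate]
    rfl
  rw [hprod]
  apply coeff_multiset_prod_eq_zero (d i)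
  · intro g hg
    rw [Multiset.mem_bind] at hg
    obtain ⟨j, _, hj⟩ := hg
    rw [Multiset.eq_of_mem_replicate hj]
    exact ha j
  · rw [Multiset.card_bind]
    have heq : (Multiset.map (Multiset.card ∘ fun j => Multiset.replicate (d j) (a j))
        Finset.univ.val).sum = ∑ j, d j := by
      simp only [Function.comp_def, Multiset.card_replicate]
      rfl
    rw [heq]
    exact Finset.single_le_sum (f := fun j => d j) (fun _ _ => Nat.zero_le _) (Finset.mem_univ i)
  · exact h

lemma coeff_substSeries_def (a : σ → MvPowerSeries τ R) (f : MvPowerSeries σ R) (e : τ →₀ ℕ) :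
    coeff e (substSeries a f) =
      ∑ d ∈ Finset.Iic (bnd σ (deg e)), coeff d f * coeff e (∏ i, a i ^ d i) := rfl

lemma coeff_substSeries {a : σ → MvPowerSeries τ R}
    (ha : ∀ i, constantCoeff (a i) = 0) (f : MvPowerSeries σ R) (e : τ →₀ ℕ)
    {s : Finset (σ →₀ ℕ)} (hs : Finset.Iic (bnd σ (deg e)) ⊆ s) :
    coeff e (substSeries a f) = ∑ d ∈ s, coeff d f * coeff e (∏ i, a i ^ d i) := by
  rw [coeff_substSeries_def]
  apply Finset.sum_subset hs
  intro d _ hd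
  rw [Finset.mem_Iic] at hd
  rw [le_bnd_iff] at hd
  push_neg at hd
  obtain ⟨i, hi⟩ := hd
  rw [coeff_prod_pow_eq_zero ha d e i hi, mul_zero]

lemma coeff_substSeries_congr (a : σ → MvPowerSeries τ R) {f g : MvPowerSeries σ R} (e : τ →₀ ℕ)
    (h : ∀ d : σ →₀ ℕ, d ≤ bnd σ (deg e) → coeff d f = coeff d g) :
    coeff e (substSeries a f) = coeff e (substSeries a g) := by
  rw [coeff_substSeries_def, coeff_substSeries_def]
  apply Finset.sum_congr rfl
  intro d hd
  rw [h d (Finset.mem_Iic.mp hd)]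

lemma substSeries_add (a : σ → MvPowerSeries τ R) (f g : MvPowerSeries σ R) :
    substSeries a (f + g) = substSeries a f + substSeries a g := by
  ext e
  rw [map_add, coeff_substSeries_def, coeff_substSeries_def, coeff_substSeries_def,
    ← Finset.sum_add_distrib]
  apply Finset.sum_congr rfl
  intro d _
  rw [map_add, add_mul]

lemma substSeries_zero (a : σ → MvPowerSeries τ R) : substSeries a (0 : MvPowerSeries σ R) = 0 := by
  ext e
  rw [coeff_substSeries_def, map_zero]
  apply Finset.sum_eq_zero
  intro d _
  rw [map_zero, zero_mul]

lemma substSeries_neg (a : σ → MvPowerSeries τ R) (f : MvPowerSeries σ R) :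
    substSeries a (-f) = - substSeries a f := by
  have := substSeries_add a f (-f)
  rw [add_neg_cancel, substSeries_zero] at this
  exact eq_neg_of_add_eq_zero_right this.symm


lemma substSeries_monomial {a : σ → MvPowerSeries τ R}
    (ha : ∀ i, constantCoeff (a i) = 0) (d : σ →₀ ℕ) (r : R) :
    substSeries a (monomial d r) = (C : R →+* MvPowerSeries τ R) r * ∏ i, a i ^ d i := by
  ext e
  rw [coeff_substSeries ha _ e (s := Finset.Iic (bnd σ (deg e)) ∪ {d})
    Finset.subset_union_left, coeff_C_mul]
  rw [Finset.sum_eq_single d]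
  · rw [coeff_monomial_same]
  · intro d' _ hd'
    rw [coeff_monomial_ne hd', zero_mul]
  · intro h
    exact absurd (Finset.mem_union_right _ (Finset.mem_singleton_self d)) h

lemma substSeries_C {a : σ → MvPowerSeries τ R}
    (ha : ∀ i, constantCoeff (a i) = 0) (r : R) :
    substSeries a ((C : R →+* MvPowerSeries σ R) r) = (C : R →+* MvPowerSeries τ R) r := by
  have : ((C : R →+* MvPowerSeries σ R) r : MvPowerSeries σ R) = monomial 0 r := rfl
  rw [this, substSeries_monomial ha]
  simp

lemma substSeries_one {a : σ → MvPowerSeries τ R}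
    (ha : ∀ i, constantCoeff (a i) = 0) :
    substSeries a (1 : MvPowerSeries σ R) = 1 := by
  have : (1 : MvPowerSeries σ R) = (C : R →+* MvPowerSeries σ R) 1 := by simp
  rw [this, substSeries_C ha, map_one]

lemma substSeries_X {a : σ → MvPowerSeries τ R}
    (ha : ∀ i, constantCoeff (a i) = 0) (i : σ) :
    substSeries a (X i) = a i := by
  rw [X_def, substSeries_monomial ha, map_one, one_mul]
  rw [Finset.prod_eq_single i]
  · simp
  · intro b _ hb
    rw [Finsupp.single_eq_of_ne hb, pow_zero]
  · intro h; exact absurd (Finset.mem_univ i) h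

/-- truncation polynomial -/
def truncPoly (B : σ →₀ ℕ) (f : MvPowerSeries σ R) : MvPolynomial σ R :=
  ∑ d ∈ Finset.Iic B, MvPolynomial.monomial d (coeff d f)

lemma coeff_truncPoly (B : σ →₀ ℕ) (f : MvPowerSeries σ R) (d : σ →₀ ℕ) :
    coeff d (truncPoly B f : MvPolynomial σ R) =
      if d ≤ B then coeff d f else 0 := by
  rw [MvPolynomial.coeff_coe, truncPoly, MvPolynomial.coeff_sum]
  simp only [MvPolynomial.coeff_monomial]
  rw [Finset.sum_ite_eq' (Finset.Iic B) d (fun d' => coeff d' f)]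
  simp [Finset.mem_Iic]

lemma substSeries_coe {a : σ → MvPowerSeries τ R}
    (ha : ∀ i, constantCoeff (a i) = 0) (p : MvPolynomial σ R) :
    substSeries a (p : MvPowerSeries σ R) = MvPolynomial.eval₂ ((C : R →+* MvPowerSeries τ R)) a p := by
  induction p using MvPolynomial.induction_on' with
  | monomial d r =>
    rw [MvPolynomial.coe_monomial, substSeries_monomial ha, MvPolynomial.eval₂_monomial]
    rw [Finsupp.prod_pow]
  | add p q hp hq =>
    rw [MvPolynomial.coe_add, substSeries_add, hp, hq, MvPolynomial.eval₂_add]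

lemma substSeries_mul {a : σ → MvPowerSeries τ R}
    (ha : ∀ i, constantCoeff (a i) = 0) (f g : MvPowerSeries σ R) :
    substSeries a (f * g) = substSeries a f * substSeries a g := by
  ext e
  set B := bnd σ (deg e) with hB
  set p := truncPoly B f with hpdef
  set q := truncPoly B g with hqdef
  have hp : ∀ d : σ →₀ ℕ, d ≤ B → coeff d (p : MvPowerSeries σ R) = coeff d f := by
    intro d hd; rw [coeff_truncPoly, if_pos hd]
  have hq : ∀ d : σ →₀ ℕ, d ≤ B → coeff d (q : MvPowerSeries σ R) = coeff d g := by
    intro d hd; rw [coeff_truncPoly, if_pos hd]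
  have step1 : coeff e (substSeries a (f * g)) =
      coeff e (substSeries a ((p : MvPowerSeries σ R) * (q : MvPowerSeries σ R))) := by
    apply coeff_substSeries_congr
    intro d hd
    rw [coeff_mul, coeff_mul]
    apply Finset.sum_congr rfl
    rintro ⟨d1, d2⟩ hmem
    rw [Finset.HasAntidiagonal.mem_antidiagonal] at hmem
    have h1 : d1 ≤ B := le_trans (hmem ▸ le_self_add) hd
    have h2 : d2 ≤ B := le_trans (hmem ▸ le_add_self) hd
    rw [hp d1 h1, hq d2 h2]
  have step2 : substSeries a ((p : MvPowerSeries σ R) * (q : MvPowerSeries σ R)) =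
      substSeries a ((p * q : MvPolynomial σ R) : MvPowerSeries σ R) := by
    rw [MvPolynomial.coe_mul]
  have step3 : substSeries a ((p * q : MvPolynomial σ R) : MvPowerSeries σ R) =
      substSeries a (p : MvPowerSeries σ R) * substSeries a (q : MvPowerSeries σ R) := by
    rw [substSeries_coe ha, substSeries_coe ha, substSeries_coe ha, MvPolynomial.eval₂_mul]
  have step5 : coeff e (substSeries a (p : MvPowerSeries σ R) *
      substSeries a (q : MvPowerSeries σ R)) =
      coeff e (substSeries a f * substSeries a g) := by
    rw [coeff_mul, coeff_mul]
    apply Finset.sum_congr rfl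
    rintro ⟨e1, e2⟩ hmem
    rw [Finset.HasAntidiagonal.mem_antidiagonal] at hmem
    dsimp only at hmem ⊢
    have he1 : deg e1 ≤ deg e := by rw [← hmem, deg_add]; omega
    have he2 : deg e2 ≤ deg e := by rw [← hmem, deg_add]; omega
    have c1 : coeff e1 (substSeries a (p : MvPowerSeries σ R)) =
        coeff e1 (substSeries a f) := by
      apply coeff_substSeries_congr
      intro d hd
      apply hp
      rw [le_bnd_iff] at hd ⊢
      intro i; exact le_trans (hd i) he1
    have c2 : coeff e2 (substSeries a (q : MvPowerSeries σ R)) =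
        coeff e2 (substSeries a g) := by
      apply coeff_substSeries_congr
      intro d hd
      apply hq
      rw [le_bnd_iff] at hd ⊢
      intro i; exact le_trans (hd i) he2
    rw [c1, c2]
  rw [step1, step2, step3, step5]

lemma substSeries_sub (a : σ → MvPowerSeries τ R) (f g : MvPowerSeries σ R) :
    substSeries a (f - g) = substSeries a f - substSeries a g := by
  rw [sub_eq_add_neg, substSeries_add, substSeries_neg, sub_eq_add_neg]

/-- the substitution ring hom -/
def substHom {a : σ → MvPowerSeries τ R} (ha : ∀ i, constantCoeff (a i) = 0) :
    MvPowerSeries σ R →+* MvPowerSeries τ R where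
  toFun := substSeries a
  map_one' := substSeries_one ha
  map_mul' := substSeries_mul ha
  map_zero' := substSeries_zero a
  map_add' := substSeries_add a

lemma substHom_apply {a : σ → MvPowerSeries τ R} (ha : ∀ i, constantCoeff (a i) = 0)
    (f : MvPowerSeries σ R) : substHom ha f = substSeries a f := rfl

lemma constantCoeff_substSeries (a : σ → MvPowerSeries τ R) (g : MvPowerSeries σ R) :
    constantCoeff (substSeries a g) = constantCoeff g := by
  rw [← coeff_zero_eq_constantCoeff, ← coeff_zero_eq_constantCoeff, coeff_substSeries_def]
  have hIic : Finset.Iic (bnd σ (deg (0 : τ →₀ ℕ))) = {0} := by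
    ext d
    simp only [Finset.mem_Iic, Finset.mem_singleton]
    constructor
    · intro h
      ext i
      have h2 : d i ≤ deg (0 : τ →₀ ℕ) := h i
      rw [deg_zero] at h2
      simpa using h2
    · rintro rfl; exact fun i => Nat.zero_le _
  rw [hIic, Finset.sum_singleton]
  simp

lemma substSeries_comp {υ : Type*} [DecidableEq υ] [Fintype τ] {a : σ → MvPowerSeries τ R}
    {b : τ → MvPowerSeries υ R}
    (ha : ∀ i, constantCoeff (a i) = 0) (hb : ∀ i, constantCoeff (b i) = 0)
    (f : MvPowerSeries σ R) :
    substSeries b (substSeries a f) = substSeries (fun i => substSeries b (a i)) f := by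
  have hba : ∀ i, constantCoeff (substSeries b (a i)) = 0 := by
    intro i; rw [constantCoeff_substSeries, ha i]
  ext e
  set N : ℕ := Fintype.card τ * deg e + deg e with hN
  set p := truncPoly (bnd σ N) f with hpdef
  have hp : ∀ d : σ →₀ ℕ, d ≤ bnd σ N → coeff d (p : MvPowerSeries σ R) = coeff d f := by
    intro d hd; rw [coeff_truncPoly, if_pos hd]
  -- deg bound for d' ∈ Iic (bnd τ (deg e))
  have hdeg : ∀ d' : τ →₀ ℕ, d' ≤ bnd τ (deg e) → deg d' ≤ N := by
    intro d' hd'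
    have : deg d' = ∑ i : τ, d' i := by
      rw [deg, Finsupp.sum_fintype]
      intro i; rfl
    rw [this]
    calc ∑ i : τ, d' i ≤ ∑ _i : τ, deg e :=
          Finset.sum_le_sum (fun i _ => hd' i)
    _ = Fintype.card τ * deg e := by rw [Finset.sum_const, smul_eq_mul, Fintype.card]
    _ ≤ N := by omega
  have step1 : coeff e (substSeries b (substSeries a f)) =
      coeff e (substSeries b (substSeries a (p : MvPowerSeries σ R))) := by
    apply coeff_substSeries_congr
    intro d' hd'
    apply coeff_substSeries_congr
    intro d hd
    apply (hp d _).symm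
    rw [le_bnd_iff] at hd ⊢
    intro i
    exact le_trans (hd i) (hdeg d' hd')
  have key : substSeries b (substSeries a (p : MvPowerSeries σ R)) =
      substSeries (fun i => substSeries b (a i)) (p : MvPowerSeries σ R) := by
    rw [substSeries_coe ha, substSeries_coe hba]
    have h1 : substSeries b (MvPolynomial.eval₂ ((C : R →+* MvPowerSeries τ R)) a p) =
        (substHom hb).comp (MvPolynomial.eval₂Hom ((C : R →+* MvPowerSeries τ R)) a) p := rfl
    rw [h1, MvPolynomial.comp_eval₂Hom]
    have h2 : (substHom hb).comp ((C : R →+* MvPowerSeries τ R)) = (C : R →+* MvPowerSeries υ R) := by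
      apply RingHom.ext
      intro r
      exact substSeries_C hb r
    rw [h2]
    rfl
  have step3 : coeff e (substSeries (fun i => substSeries b (a i)) (p : MvPowerSeries σ R)) =
      coeff e (substSeries (fun i => substSeries b (a i)) f) := by
    apply coeff_substSeries_congr
    intro d hd
    apply hp
    rw [le_bnd_iff] at hd ⊢
    intro i
    exact le_trans (hd i) (by omega)
  rw [step1, key, step3]

lemma substSeries_id (f : MvPowerSeries σ R) :
    substSeries (fun i => (X i : MvPowerSeries σ R)) f = f := by
  have hX : ∀ i : σ, constantCoeff (X i : MvPowerSeries σ R) = 0 := fun i => constantCoeff_X i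
  have hmono : ∀ d : σ →₀ ℕ, (∏ i, (X i : MvPowerSeries σ R) ^ d i) = monomial d 1 := by
    intro d
    calc (∏ i, (X i : MvPowerSeries σ R) ^ d i)
        = ∏ i, (MvPolynomial.coeToMvPowerSeries.ringHom (MvPolynomial.X i ^ d i)
            : MvPowerSeries σ R) := by
          apply Finset.prod_congr rfl
          intro i _
          rw [map_pow]
          rw [MvPolynomial.coeToMvPowerSeries.ringHom_apply, MvPolynomial.coe_X]
      _ = MvPolynomial.coeToMvPowerSeries.ringHom (∏ i, MvPolynomial.X i ^ d i) :=
          (map_prod _ _ _).symm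
      _ = monomial d 1 := by
          have : (∏ i, MvPolynomial.X i ^ d i : MvPolynomial σ R) =
              MvPolynomial.monomial d 1 := by
            rw [MvPolynomial.monomial_eq, map_one, one_mul, Finsupp.prod_pow]
          rw [this, MvPolynomial.coeToMvPowerSeries.ringHom_apply, MvPolynomial.coe_monomial]
  ext e
  rw [coeff_substSeries hX f e (s := Finset.Iic (bnd σ (deg e)) ∪ {e})
    Finset.subset_union_left]
  rw [Finset.sum_eq_single e]
  · rw [hmono, coeff_monomial_same, mul_one]
  · intro d _ hd
    rw [hmono, coeff_monomial, if_neg (fun h => hd h.symm), mul_zero]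
  · intro h
    exact absurd (Finset.mem_union_right _ (Finset.mem_singleton_self e)) h

end SubstAux

namespace SubstAux

variable {R : Type*} [CommRing R]

lemma substSeries_zero_fam {τ' : Type*} [DecidableEq τ'] (g : PowerSeries R)
    (hg : PowerSeries.constantCoeff g = 0) :
    substSeries (fun _ : Unit => (0 : MvPowerSeries τ' R)) g = 0 := by
  ext e
  rw [coeff_substSeries_def, map_zero]
  apply Finset.sum_eq_zero
  intro d _
  by_cases h : d = 0
  · subst h
    rw [coeff_zero_eq_constantCoeff]
    exact mul_eq_zero_of_left hg _
  · have hd0 : d () ≠ 0 := fun hc => h (by ext j; exact hc)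
    have hprod : (∏ i : Unit, (0 : MvPowerSeries τ' R) ^ d i) = 0 := by
      rw [Fintype.prod_unique]
      exact zero_pow hd0
    rw [hprod, map_zero, mul_zero]

lemma coeff_subst_01 (h : MvPowerSeries (Fin 2) R) (n : ℕ) :
    PowerSeries.coeff n
      (substSeries (![0, PowerSeries.X] : Fin 2 → PowerSeries R) h) =
    coeff (Finsupp.single 1 n) h := by
  have hZ : ∀ i : Fin 2, constantCoeff ((![0, PowerSeries.X] : Fin 2 → PowerSeries R) i)
      = 0 := by
    intro i
    fin_cases i
    · simp
    · exact constantCoeff_X ()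
  have hcoeff : PowerSeries.coeff n
      (substSeries (![0, PowerSeries.X] : Fin 2 → PowerSeries R) h) =
      coeff (Finsupp.single () n)
        (substSeries (![0, PowerSeries.X] : Fin 2 → PowerSeries R) h) := rfl
  rw [hcoeff, coeff_substSeries hZ h (Finsupp.single () n)
    (s := Finset.Iic (bnd (Fin 2) (deg (Finsupp.single () n))) ∪ {Finsupp.single 1 n})
    Finset.subset_union_left]
  rw [Finset.sum_eq_single (Finsupp.single 1 n)]
  · have hprod : (∏ i : Fin 2, (![0, PowerSeries.X] : Fin 2 → PowerSeries R) i
        ^ (Finsupp.single (1 : Fin 2) n) i) = (PowerSeries.X : PowerSeries R) ^ n := by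
      rw [Fin.prod_univ_two]
      simp
    rw [hprod]
    have : coeff (Finsupp.single () n) ((PowerSeries.X : PowerSeries R) ^ n) = 1 := by
      have : (PowerSeries.X : PowerSeries R) = X () := rfl
      rw [this, coeff_X_pow, if_pos rfl]
    rw [this, mul_one]
  · intro d _ hd
    rw [Fin.prod_univ_two]
    by_cases hd0 : d 0 = 0
    · have hd1 : d 1 ≠ n := by
        intro hc
        apply hd
        ext i
        fin_cases i <;> simp [hd0, hc, Finsupp.single_apply]
      have : coeff (Finsupp.single () n)
          ((![0, PowerSeries.X] : Fin 2 → PowerSeries R) 0 ^ d 0 *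
           (![0, PowerSeries.X] : Fin 2 → PowerSeries R) 1 ^ d 1) = 0 := by
        simp only [Matrix.cons_val_zero, Matrix.cons_val_one, Matrix.head_cons, hd0, pow_zero,
          one_mul]
        have hX : (PowerSeries.X : PowerSeries R) = X () := rfl
        rw [hX, coeff_X_pow, if_neg]
        intro hc
        have hdn : n = d 1 := by
          simpa using congrArg (fun g : Unit →₀ ℕ => g ()) hc
        exact hd1 hdn.symm
      rw [this, mul_zero]
    · have : coeff (Finsupp.single () n)
          ((![0, PowerSeries.X] : Fin 2 → PowerSeries R) 0 ^ d 0 *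
           (![0, PowerSeries.X] : Fin 2 → PowerSeries R) 1 ^ d 1) = 0 := by
        simp only [Matrix.cons_val_zero]
        rw [zero_pow hd0, zero_mul, map_zero]
      rw [this, mul_zero]
  · intro hnot
    exact absurd (Finset.mem_union_right _ (Finset.mem_singleton_self _)) hnot

lemma mul_X_cancel {p q : MvPowerSeries (Fin 2) R}
    (h : (X 0 : MvPowerSeries (Fin 2) R) * p = X 0 * q) : p = q := by
  ext e
  have h1 := congrArg (coeff (Finsupp.single 0 1 + e)) h
  rw [X_def, coeff_add_monomial_mul, coeff_add_monomial_mul, one_mul, one_mul] at h1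
  exact h1

lemma diag_dvd (w : MvPowerSeries (Fin 2) R)
    (hw : substSeries (fun _ : Fin 2 => (PowerSeries.X : PowerSeries R)) w = 0) :
    (X 0 - X 1 : MvPowerSeries (Fin 2) R) ∣ w := by
  have hA : ∀ i : Fin 2, constantCoeff
      ((![X 0 + X 1, X 1] : Fin 2 → MvPowerSeries (Fin 2) R) i) = 0 := by
    intro i; fin_cases i <;> simp
  have hA' : ∀ i : Fin 2, constantCoeff
      ((![X 0 - X 1, X 1] : Fin 2 → MvPowerSeries (Fin 2) R) i) = 0 := by
    intro i; fin_cases i <;> simp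
  have hZ : ∀ i : Fin 2, constantCoeff
      ((![0, PowerSeries.X] : Fin 2 → PowerSeries R) i) = 0 := by
    intro i
    fin_cases i
    · simp
    · exact constantCoeff_X ()
  have hAA' : substSeries (![X 0 - X 1, X 1] : Fin 2 → MvPowerSeries (Fin 2) R)
      (substSeries (![X 0 + X 1, X 1] : Fin 2 → MvPowerSeries (Fin 2) R) w) = w := by
    rw [substSeries_comp hA hA']
    have hfam : (fun i => substSeries (![X 0 - X 1, X 1] : Fin 2 → MvPowerSeries (Fin 2) R)
        ((![X 0 + X 1, X 1] : Fin 2 → MvPowerSeries (Fin 2) R) i)) =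
        fun i : Fin 2 => (X i : MvPowerSeries (Fin 2) R) := by
      funext i
      fin_cases i
      · show substSeries _ (X 0 + X 1) = _
        rw [substSeries_add, substSeries_X hA', substSeries_X hA']
        simp
      · show substSeries _ (X 1) = _
        rw [substSeries_X hA']
        simp
    rw [hfam, substSeries_id]
  have hZA : substSeries (![0, PowerSeries.X] : Fin 2 → PowerSeries R)
      (substSeries (![X 0 + X 1, X 1] : Fin 2 → MvPowerSeries (Fin 2) R) w) = 0 := by
    rw [substSeries_comp hA hZ]
    have hfam : (fun i => substSeries (![0, PowerSeries.X] : Fin 2 → PowerSeries R)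
        ((![X 0 + X 1, X 1] : Fin 2 → MvPowerSeries (Fin 2) R) i)) =
        fun _ : Fin 2 => (PowerSeries.X : PowerSeries R) := by
      funext i
      fin_cases i
      · show substSeries _ (X 0 + X 1) = _
        rw [substSeries_add, substSeries_X hZ, substSeries_X hZ]
        simp
      · show substSeries _ (X 1) = _
        rw [substSeries_X hZ]
        simp
    rw [hfam, hw]
  have hXdvd : (X 0 : MvPowerSeries (Fin 2) R) ∣
      substSeries (![X 0 + X 1, X 1] : Fin 2 → MvPowerSeries (Fin 2) R) w := by
    rw [X_dvd_iff]
    intro m hm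
    have hm' : m = Finsupp.single 1 (m 1) := by
      ext i
      fin_cases i <;> simp [hm, Finsupp.single_apply]
    rw [hm', ← coeff_subst_01, hZA, map_zero]
  obtain ⟨c, hc⟩ := hXdvd
  refine ⟨substSeries (![X 0 - X 1, X 1] : Fin 2 → MvPowerSeries (Fin 2) R) c, ?_⟩
  conv_lhs => rw [← hAA']
  rw [hc, substSeries_mul hA', substSeries_X hA']
  simp

end SubstAux

open SubstAux

/-- Let `F` be a one-dimensional commutative formal group law over `R`
with formal inverse `ι`, and let `σ` be the swap of the two variables of `R[[x,y]]`
(realized by substituting `(y, x)`). Then for every `f ∈ R[[x,y]]` the element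
`f·(y -_F x) + σ(f)·(x -_F y)` is divisible by `(x -_F y)·(y -_F x)`: the formal divided
difference operator `C(f) = f/(x -_F y) + σ(f)/(y -_F x)` maps power series to power
series. -/
theorem fgl_divided_difference_integral {R : Type*} [CommRing R]
    (F : MvPowerSeries (Fin 2) R) (hF : IsFormalGroupLaw R F)
    (ι : PowerSeries R) (hι : IsFormalInverse F ι) :
    ∀ f : MvPowerSeries (Fin 2) R,
      (fDiff F ι * fDiffSwap F ι) ∣
        (f * fDiffSwap F ι
          + MvPowerSeries.substSeries (![X 1, X 0] : Fin 2 → MvPowerSeries (Fin 2) R) f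
            * fDiff F ι) := by
  intro f
  classical
  -- constant coefficient of ι
  have hι0 : constantCoeff ι = 0 := hι.1
  -- goodness of various families
  have hX1fam : ∀ _i : Unit, constantCoeff (X 1 : MvPowerSeries (Fin 2) R) = 0 :=
    fun _ => constantCoeff_X 1
  have hX0fam : ∀ _i : Unit, constantCoeff (X 0 : MvPowerSeries (Fin 2) R) = 0 :=
    fun _ => constantCoeff_X 0
  set ι1 : MvPowerSeries (Fin 2) R :=
    MvPowerSeries.substSeries (fun _ : Unit => (X 1 : MvPowerSeries (Fin 2) R)) ι with hι1def
  set ι0 : MvPowerSeries (Fin 2) R :=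
    MvPowerSeries.substSeries (fun _ : Unit => (X 0 : MvPowerSeries (Fin 2) R)) ι with hι0def
  have hι1c : constantCoeff ι1 = 0 := by
    rw [hι1def, constantCoeff_substSeries]; exact hι0
  have hι0c : constantCoeff ι0 = 0 := by
    rw [hι0def, constantCoeff_substSeries]; exact hι0
  have hufam : ∀ i : Fin 2, constantCoeff
      ((![X 0, ι1] : Fin 2 → MvPowerSeries (Fin 2) R) i) = 0 := by
    intro i; fin_cases i
    · simp
    · exact hι1c
  have hσ : ∀ i : Fin 2, constantCoeff
      ((![X 1, X 0] : Fin 2 → MvPowerSeries (Fin 2) R) i) = 0 := by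
    intro i; fin_cases i <;> simp
  have hΔ : ∀ _i : Fin 2, constantCoeff (PowerSeries.X : PowerSeries R) = 0 :=
    fun _ => constantCoeff_X ()
  have hW : ∀ i : Fin 2, constantCoeff
      ((![X 0, 0] : Fin 2 → MvPowerSeries (Fin 2) R) i) = 0 := by
    intro i; fin_cases i <;> simp
  -- u and v
  have hudef : fDiff F ι =
      MvPowerSeries.substSeries (![X 0, ι1] : Fin 2 → MvPowerSeries (Fin 2) R) F := rfl
  have hvdef : fDiffSwap F ι =
      MvPowerSeries.substSeries (![X 1, ι0] : Fin 2 → MvPowerSeries (Fin 2) R) F := rfl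
  -- σ u = v
  have hσu : MvPowerSeries.substSeries (![X 1, X 0] : Fin 2 → MvPowerSeries (Fin 2) R)
      (fDiff F ι) = fDiffSwap F ι := by
    rw [hudef, substSeries_comp hufam hσ, hvdef]
    have hfam : (fun i => MvPowerSeries.substSeries
        (![X 1, X 0] : Fin 2 → MvPowerSeries (Fin 2) R)
        ((![X 0, ι1] : Fin 2 → MvPowerSeries (Fin 2) R) i)) =
        (![X 1, ι0] : Fin 2 → MvPowerSeries (Fin 2) R) := by
      funext i
      fin_cases i
      · show MvPowerSeries.substSeries _ (X 0) = X 1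
        rw [substSeries_X hσ]
        rfl
      · show MvPowerSeries.substSeries _ ι1 = ι0
        rw [hι1def, hι0def, substSeries_comp hX1fam hσ]
        have : (fun _ : Unit => MvPowerSeries.substSeries
            (![X 1, X 0] : Fin 2 → MvPowerSeries (Fin 2) R) (X 1 : MvPowerSeries (Fin 2) R)) =
            (fun _ : Unit => (X 0 : MvPowerSeries (Fin 2) R)) := by
          funext j
          rw [substSeries_X hσ]
          rfl
        rw [this]
    rw [hfam]
  -- Δ (σ g) = Δ g
  have hΔσ : ∀ g : MvPowerSeries (Fin 2) R,
      MvPowerSeries.substSeries (fun _ : Fin 2 => (PowerSeries.X : PowerSeries R))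
        (MvPowerSeries.substSeries (![X 1, X 0] : Fin 2 → MvPowerSeries (Fin 2) R) g) =
      MvPowerSeries.substSeries (fun _ : Fin 2 => (PowerSeries.X : PowerSeries R)) g := by
    intro g
    rw [substSeries_comp hσ hΔ]
    have hfam : (fun i => MvPowerSeries.substSeries
        (fun _ : Fin 2 => (PowerSeries.X : PowerSeries R))
        ((![X 1, X 0] : Fin 2 → MvPowerSeries (Fin 2) R) i)) =
        (fun _ : Fin 2 => (PowerSeries.X : PowerSeries R)) := by
      funext i
      fin_cases i
      · show MvPowerSeries.substSeries _ (X 1) = _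
        rw [substSeries_X hΔ]
      · show MvPowerSeries.substSeries _ (X 0) = _
        rw [substSeries_X hΔ]
    rw [hfam]
  -- Δ u = 0
  have hΔu : MvPowerSeries.substSeries (fun _ : Fin 2 => (PowerSeries.X : PowerSeries R))
      (fDiff F ι) = 0 := by
    rw [hudef, substSeries_comp hufam hΔ]
    have hfam : (fun i => MvPowerSeries.substSeries
        (fun _ : Fin 2 => (PowerSeries.X : PowerSeries R))
        ((![X 0, ι1] : Fin 2 → MvPowerSeries (Fin 2) R) i)) =
        (![PowerSeries.X, ι] : Fin 2 → PowerSeries R) := by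
      funext i
      fin_cases i
      · show MvPowerSeries.substSeries _ (X 0) = _
        rw [substSeries_X hΔ]
        rfl
      · show MvPowerSeries.substSeries _ ι1 = _
        rw [hι1def, substSeries_comp hX1fam hΔ]
        have : (fun _ : Unit => MvPowerSeries.substSeries
            (fun _ : Fin 2 => (PowerSeries.X : PowerSeries R)) (X 1 : MvPowerSeries (Fin 2) R)) =
            fun i : Unit => (X i : PowerSeries R) := by
          funext j
          rw [substSeries_X hΔ]
          rfl
        rw [this, substSeries_id]
        rfl
    rw [hfam]
    exact hι.2
  -- u = (X 0 - X 1) * a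
  obtain ⟨a, ha⟩ := diag_dvd (fDiff F ι) hΔu
  -- W u = X 0
  have hWu : MvPowerSeries.substSeries (![X 0, 0] : Fin 2 → MvPowerSeries (Fin 2) R)
      (fDiff F ι) = X 0 := by
    rw [hudef, substSeries_comp hufam hW]
    have hfam : (fun i => MvPowerSeries.substSeries
        (![X 0, 0] : Fin 2 → MvPowerSeries (Fin 2) R)
        ((![X 0, ι1] : Fin 2 → MvPowerSeries (Fin 2) R) i)) =
        (![X 0, 0] : Fin 2 → MvPowerSeries (Fin 2) R) := by
      funext i
      fin_cases i
      · show MvPowerSeries.substSeries _ (X 0) = _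
        rw [substSeries_X hW]
        rfl
      · show MvPowerSeries.substSeries _ ι1 = _
        rw [hι1def, substSeries_comp hX1fam hW]
        have : (fun _ : Unit => MvPowerSeries.substSeries
            (![X 0, 0] : Fin 2 → MvPowerSeries (Fin 2) R) (X 1 : MvPowerSeries (Fin 2) R)) =
            fun _ : Unit => (0 : MvPowerSeries (Fin 2) R) := by
          funext j
          rw [substSeries_X hW]
          simp
        rw [this, substSeries_zero_fam ι hι0]
        simp
    rw [hfam]
    exact hF.subst_zero_right
  -- W a = 1, so a is a unit
  have hWa : MvPowerSeries.substSeries (![X 0, 0] : Fin 2 → MvPowerSeries (Fin 2) R) a = 1 := by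
    apply mul_X_cancel (R := R)
    have := congrArg (MvPowerSeries.substSeries (![X 0, 0] : Fin 2 → MvPowerSeries (Fin 2) R)) ha
    rw [hWu, substSeries_mul hW, substSeries_sub, substSeries_X hW, substSeries_X hW] at this
    simp only [Matrix.cons_val_zero, Matrix.cons_val_one, Matrix.head_cons, sub_zero] at this
    rw [mul_one, ← this]
  have haunit : IsUnit a := by
    rw [isUnit_iff_constantCoeff]
    have : constantCoeff a =
        constantCoeff
          (MvPowerSeries.substSeries (![X 0, 0] : Fin 2 → MvPowerSeries (Fin 2) R) a) :=
      (constantCoeff_substSeries _ a).symm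
    rw [this, hWa, map_one]
    exact isUnit_one
  -- σ a is a unit
  set sa := MvPowerSeries.substSeries (![X 1, X 0] : Fin 2 → MvPowerSeries (Fin 2) R) a
    with hsadef
  have hsaunit : IsUnit sa := by
    rw [isUnit_iff_constantCoeff, hsadef, constantCoeff_substSeries]
    rw [isUnit_iff_constantCoeff] at haunit
    exact haunit
  -- v = (X 1 - X 0) * σ a
  have hv : fDiffSwap F ι = (X 1 - X 0 : MvPowerSeries (Fin 2) R) * sa := by
    rw [← hσu, ha, substSeries_mul hσ, substSeries_sub, substSeries_X hσ, substSeries_X hσ]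
    simp only [Matrix.cons_val_zero, Matrix.cons_val_one, Matrix.head_cons]
    rfl
  -- the divided difference cofactor
  set sf := MvPowerSeries.substSeries (![X 1, X 0] : Fin 2 → MvPowerSeries (Fin 2) R) f
    with hsfdef
  have hΔw : MvPowerSeries.substSeries (fun _ : Fin 2 => (PowerSeries.X : PowerSeries R))
      (sf * a - f * sa) = 0 := by
    rw [substSeries_sub, substSeries_mul hΔ, substSeries_mul hΔ, hsfdef, hsadef, hΔσ, hΔσ,
      sub_self]
  obtain ⟨c, hc⟩ := diag_dvd (sf * a - f * sa) hΔw
  obtain ⟨t, ht⟩ := (haunit.mul hsaunit).exists_right_inv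
  refine ⟨-(t * c), ?_⟩
  rw [ha, hv]
  linear_combination (X 0 - X 1 : MvPowerSeries (Fin 2) R) * hc
    - (X 0 - X 1 : MvPowerSeries (Fin 2) R) ^ 2 * c * ht
end
end
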